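/- arXiv:2407.21755 — 4 statements merged into one kernel-verified Lean document; each statement's English description precedes it below -/
import Mathlib

section
/- Let n ≥ 5 be an odd positive integer. Then both polynomials ∑_{π ∈ S_n, sgn(π)=1} t^{exc(π)} and ∑_{π ∈ S_n, sgn(π)=-1} t^{exc(π)} (summing over even and odd permutations of {1,...,n}, respectively) are gamma-positive with center of symmetry (n-1)/2. -/
open Polynomial Finset

/-- Number of excedances of a permutation of `Fin n` (indices where `π i > i`). -/
def exc {n : ℕ} (π : Equiv.Perm (Fin n)) : ℕ :=
  (Finset.univ.filter fun i => π i > i).card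

/-- Mod-k-alternating permutations of size `n` starting with remainder `r` (mod k):
permutations with `π i - i ≡ r - 1 (mod k)` for all `i`. -/
def MP (n k r : ℕ) : Finset (Equiv.Perm (Fin n)) :=
  Finset.univ.filter fun π => ∀ i : Fin n, ((π i : ℤ) - (i : ℤ)) ≡ ((r : ℤ) - 1) [ZMOD (k : ℤ)]

/-- A polynomial `f ∈ ℚ[t]` is gamma-positive with center of symmetry `c` if there are
nonnegative integers `r ≤ N` with `N + r = 2c` and nonnegative rationals `γ i` with
`f = ∑_{i=0}^{⌊(N-r)/2⌋} γ i * t^(r+i) * (1+t)^(N-r-2i)`. -/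
def GammaPositive (f : ℚ[X]) (c : ℚ) : Prop :=
  ∃ N r : ℕ, r ≤ N ∧ (N : ℚ) + (r : ℚ) = 2 * c ∧
    ∃ γ : ℕ → ℚ, (∀ i, 0 ≤ γ i) ∧
      f = ∑ i ∈ Finset.range ((N - r) / 2 + 1), C (γ i) * X ^ (r + i) * (1 + X) ^ (N - r - 2 * i)


open Equiv Equiv.Perm

theorem Equiv.Perm.apply_inv_self {α : Type*} (f : Equiv.Perm α) (x : α) : f (f⁻¹ x) = x :=
  f.apply_symm_apply x

theorem Equiv.Perm.inv_apply_self {α : Type*} (f : Equiv.Perm α) (x : α) : f⁻¹ (f x) = x :=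
  f.symm_apply_apply x

lemma exc_eq_sum {n : ℕ} (π : Equiv.Perm (Fin n)) :
    exc π = ∑ i : Fin n, if i < π i then 1 else 0 := by
  rw [exc, Finset.card_filter]

lemma exc_zero {n : ℕ} (e : Equiv.Perm (Fin n)) :
    exc (Equiv.Perm.decomposeFin.symm (0, e)) = exc e := by
  rw [exc_eq_sum, exc_eq_sum, Fin.sum_univ_succ]
  rw [Equiv.Perm.decomposeFin_symm_apply_zero, if_neg (lt_irrefl _), zero_add]
  refine Finset.sum_congr rfl fun j _ => ?_
  rw [Equiv.Perm.decomposeFin_symm_apply_succ]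
  simp [Fin.succ_lt_succ_iff]

lemma exc_succ {n : ℕ} (e : Equiv.Perm (Fin n)) (q : Fin n) :
    exc (Equiv.Perm.decomposeFin.symm (q.succ, e)) =
      if e⁻¹ q < q then exc e else exc e + 1 := by
  have hπ0 : (if (0 : Fin (n+1)) < Equiv.Perm.decomposeFin.symm (q.succ, e) 0 then 1 else 0) = 1 := by
    rw [Equiv.Perm.decomposeFin_symm_apply_zero, if_pos q.succ_pos]
  have key : ∀ j : Fin n,
      (if j.succ < Equiv.Perm.decomposeFin.symm (q.succ, e) j.succ then 1 else 0) =
        if j = e⁻¹ q then 0 else (if j < e j then 1 else 0) := by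
    intro j
    rw [Equiv.Perm.decomposeFin_symm_apply_succ]
    by_cases hj : j = e⁻¹ q
    · subst hj
      rw [Equiv.Perm.apply_inv_self, Equiv.swap_apply_right, if_pos rfl]
      rw [if_neg (by simp [Fin.lt_iff_val_lt_val])]
    · have h1 : (e j).succ ≠ 0 := Fin.succ_ne_zero _
      have h2 : (e j).succ ≠ q.succ := by
        simp only [ne_eq, Fin.succ_inj]
        intro h; exact hj (by rw [← h, Equiv.Perm.inv_apply_self])
      rw [Equiv.swap_apply_of_ne_of_ne h1 h2, if_neg hj]
      by_cases h : j < e j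
      · rw [if_pos h, if_pos (Fin.succ_lt_succ_iff.mpr h)]
      · rw [if_neg h, if_neg (fun hc => h (Fin.succ_lt_succ_iff.mp hc))]
  rw [exc_eq_sum, Fin.sum_univ_succ, hπ0]
  rw [Finset.sum_congr rfl (fun j _ => key j)]
  have h0 : (if (e⁻¹ q : Fin n) = e⁻¹ q then (0:ℕ) else (if (e⁻¹ q : Fin n) < e (e⁻¹ q) then 1 else 0)) = 0 := if_pos rfl
  rw [← Finset.add_sum_erase _ _ (Finset.mem_univ (e⁻¹ q)), h0, zero_add]
  have herase : ∑ j ∈ Finset.univ.erase (e⁻¹ q), (if j = e⁻¹ q then (0:ℕ) else (if j < e j then 1 else 0))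
      = ∑ j ∈ Finset.univ.erase (e⁻¹ q), (if j < e j then 1 else 0) :=
    Finset.sum_congr rfl fun j hj => if_neg (Finset.mem_erase.mp hj).1
  rw [herase]
  have hfull : exc e = (if (e⁻¹ q : Fin n) < e (e⁻¹ q) then 1 else 0) +
      ∑ j ∈ Finset.univ.erase (e⁻¹ q), (if j < e j then 1 else 0) := by
    rw [exc_eq_sum]
    exact (Finset.add_sum_erase _ _ (Finset.mem_univ (e⁻¹ q))).symm
  rw [Equiv.Perm.apply_inv_self] at hfull
  by_cases hq : e⁻¹ q < q
  · rw [if_pos hq]; rw [if_pos hq] at hfull; omega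
  · rw [if_neg hq]; rw [if_neg hq] at hfull; omega

lemma exc_le {n : ℕ} (e : Equiv.Perm (Fin n)) : exc e ≤ n := by
  simpa [exc] using Finset.card_filter_le Finset.univ (fun i => e i > i)

lemma card_inv_lt {n : ℕ} (e : Equiv.Perm (Fin n)) :
    (Finset.univ.filter fun q : Fin n => e⁻¹ q < q).card = exc e := by
  rw [exc]
  apply Finset.card_bij (fun q _ => e⁻¹ q)
  · intro q hq
    simp only [Finset.mem_filter, Finset.mem_univ, true_and] at hq ⊢
    rw [Equiv.Perm.apply_inv_self]; exact hq
  · intro a ha b hb h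
    exact e⁻¹.injective h
  · intro j hj
    simp only [Finset.mem_filter, Finset.mem_univ, true_and, gt_iff_lt] at hj
    exact ⟨e j, by simpa [Equiv.Perm.inv_apply_self] using hj, by simp⟩

noncomputable def PP (n : ℕ) : ℚ[X] := ∑ π : Equiv.Perm (Fin n), X ^ exc π
noncomputable def QQ (n : ℕ) : ℚ[X] :=
  ∑ π : Equiv.Perm (Fin n), C ((Equiv.Perm.sign π : ℤ) : ℚ) * X ^ exc π

lemma fiber_tail {n : ℕ} (e : Equiv.Perm (Fin n)) :
    ∑ q : Fin n, (X : ℚ[X]) ^ exc (Equiv.Perm.decomposeFin.symm (q.succ, e)) =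
      C (exc e : ℚ) * X ^ exc e + C ((n : ℚ) - exc e) * X ^ (exc e + 1) := by
  have : ∀ q : Fin n, (X : ℚ[X]) ^ exc (Equiv.Perm.decomposeFin.symm (q.succ, e)) =
      if e⁻¹ q < q then X ^ exc e else X ^ (exc e + 1) := by
    intro q
    rw [exc_succ]
    by_cases h : e⁻¹ q < q
    · rw [if_pos h, if_pos h]
    · rw [if_neg h, if_neg h]
  rw [Finset.sum_congr rfl (fun q _ => this q), Finset.sum_ite]
  rw [Finset.sum_const, Finset.sum_const, card_inv_lt]
  have hcard : (Finset.univ.filter fun q : Fin n => ¬ e⁻¹ q < q).card = n - exc e := by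
    have := Finset.card_filter_add_card_filter_not (s := (Finset.univ : Finset (Fin n)))
      (p := fun q => e⁻¹ q < q)
    rw [card_inv_lt] at this
    simp only [Finset.card_univ, Fintype.card_fin] at this
    omega
  rw [hcard]
  have hle := exc_le e
  rw [nsmul_eq_mul, nsmul_eq_mul, C_sub]
  push_cast [Nat.cast_sub hle]
  simp only [Polynomial.C_eq_natCast]

lemma X_mul_deriv {ι : Type*} (s : Finset ι) (a : ι → ℚ) (d : ι → ℕ) :
    X * derivative (∑ i ∈ s, C (a i) * X ^ d i) = ∑ i ∈ s, C (a i * d i) * X ^ d i := by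
  rw [derivative_sum, Finset.mul_sum]
  refine Finset.sum_congr rfl fun i _ => ?_
  rw [derivative_C_mul_X_pow]
  cases hd : d i with
  | zero => simp
  | succ k =>
    rw [Nat.add_sub_cancel]
    push_cast
    ring

lemma PP_rec (n : ℕ) :
    PP (n + 1) = PP n + C (n : ℚ) * (X * PP n) + (1 - X) * (X * derivative (PP n)) := by
  have h1 : PP (n+1) = ∑ pe : Fin (n+1) × Equiv.Perm (Fin n),
      (X : ℚ[X]) ^ exc (Equiv.Perm.decomposeFin.symm pe) :=
    (Equiv.sum_comp Equiv.Perm.decomposeFin.symm _).symm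
  rw [h1, Fintype.sum_prod_type_right]
  have h2 : ∀ e : Equiv.Perm (Fin n), ∑ p : Fin (n+1),
      (X : ℚ[X]) ^ exc (Equiv.Perm.decomposeFin.symm (p, e)) =
      X ^ exc e + (C (exc e : ℚ) * X ^ exc e + C ((n : ℚ) - exc e) * X ^ (exc e + 1)) := by
    intro e
    rw [Fin.sum_univ_succ, exc_zero, fiber_tail]
  rw [Finset.sum_congr rfl (fun e _ => h2 e), Finset.sum_add_distrib, Finset.sum_add_distrib]
  have hP : ∑ e : Equiv.Perm (Fin n), (X:ℚ[X]) ^ exc e = PP n := rfl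
  have hPP : PP n = ∑ e : Equiv.Perm (Fin n), C (1:ℚ) * X ^ exc e := by
    simp [PP]
  have hd : X * derivative (PP n) = ∑ e : Equiv.Perm (Fin n), C ((exc e : ℚ)) * X ^ exc e := by
    rw [hPP, X_mul_deriv]
    simp
  have hsub : ∀ e : Equiv.Perm (Fin n), C ((n : ℚ) - exc e) * (X:ℚ[X]) ^ (exc e + 1) =
      X * (C (n:ℚ) * X ^ exc e) - X * (C ((exc e : ℚ)) * X ^ exc e) := by
    intro e
    rw [C_sub]
    ring
  rw [Finset.sum_congr rfl (fun e _ => hsub e), Finset.sum_sub_distrib]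
  rw [← Finset.mul_sum, ← Finset.mul_sum, ← Finset.mul_sum, ← hd, hP]
  ring

lemma QQ_rec (n : ℕ) :
    QQ (n + 1) = QQ n - (C (n : ℚ) * (X * QQ n) + (1 - X) * (X * derivative (QQ n))) := by
  have h1 : QQ (n+1) = ∑ pe : Fin (n+1) × Equiv.Perm (Fin n),
      C ((Equiv.Perm.sign (Equiv.Perm.decomposeFin.symm pe) : ℤ) : ℚ) *
        (X : ℚ[X]) ^ exc (Equiv.Perm.decomposeFin.symm pe) :=
    (Equiv.sum_comp Equiv.Perm.decomposeFin.symm _).symm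
  rw [h1, Fintype.sum_prod_type_right]
  have h2 : ∀ e : Equiv.Perm (Fin n), ∑ p : Fin (n+1),
      C ((Equiv.Perm.sign (Equiv.Perm.decomposeFin.symm (p, e)) : ℤ) : ℚ) *
        (X : ℚ[X]) ^ exc (Equiv.Perm.decomposeFin.symm (p, e)) =
      C ((Equiv.Perm.sign e : ℤ) : ℚ) * X ^ exc e -
        C ((Equiv.Perm.sign e : ℤ) : ℚ) *
          (C (exc e : ℚ) * X ^ exc e + C ((n : ℚ) - exc e) * X ^ (exc e + 1)) := by
    intro e
    rw [Fin.sum_univ_succ, exc_zero]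
    have hs0 : ((Equiv.Perm.sign (Equiv.Perm.decomposeFin.symm ((0 : Fin (n+1)), e)) : ℤ) : ℚ) =
        ((Equiv.Perm.sign e : ℤ) : ℚ) := by
      rw [Equiv.Perm.decomposeFin.symm_sign, if_pos rfl, one_mul]
    have hsS : ∀ q : Fin n,
        ((Equiv.Perm.sign (Equiv.Perm.decomposeFin.symm (q.succ, e)) : ℤ) : ℚ) =
        -((Equiv.Perm.sign e : ℤ) : ℚ) := by
      intro q
      rw [Equiv.Perm.decomposeFin.symm_sign, if_neg (Fin.succ_ne_zero q)]
      push_cast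
      ring
    rw [hs0]
    have : ∀ q : Fin n, C ((Equiv.Perm.sign (Equiv.Perm.decomposeFin.symm (q.succ, e)) : ℤ) : ℚ) *
        (X:ℚ[X]) ^ exc (Equiv.Perm.decomposeFin.symm (q.succ, e)) =
        -(C ((Equiv.Perm.sign e : ℤ) : ℚ)) * (X:ℚ[X]) ^ exc (Equiv.Perm.decomposeFin.symm (q.succ, e)) := by
      intro q
      rw [hsS q, map_neg]
    rw [Finset.sum_congr rfl (fun q _ => this q), ← Finset.mul_sum, fiber_tail]
    ring
  rw [Finset.sum_congr rfl (fun e _ => h2 e), Finset.sum_sub_distrib]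
  have hQ : ∑ e : Equiv.Perm (Fin n), C ((Equiv.Perm.sign e : ℤ) : ℚ) * (X:ℚ[X]) ^ exc e = QQ n := rfl
  have hd : X * derivative (QQ n) =
      ∑ e : Equiv.Perm (Fin n), C (((Equiv.Perm.sign e : ℤ) : ℚ) * (exc e : ℚ)) * X ^ exc e := by
    rw [QQ, X_mul_deriv]
  have hsub : ∀ e : Equiv.Perm (Fin n),
      C ((Equiv.Perm.sign e : ℤ) : ℚ) *
        (C (exc e : ℚ) * (X:ℚ[X]) ^ exc e + C ((n : ℚ) - exc e) * X ^ (exc e + 1)) =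
      C (((Equiv.Perm.sign e : ℤ) : ℚ) * (exc e : ℚ)) * X ^ exc e +
        (X * (C (n:ℚ) * (C ((Equiv.Perm.sign e : ℤ) : ℚ) * X ^ exc e)) -
          X * (C (((Equiv.Perm.sign e : ℤ) : ℚ) * (exc e : ℚ)) * X ^ exc e)) := by
    intro e
    rw [C_sub, C_mul]
    ring
  rw [Finset.sum_congr rfl (fun e _ => hsub e), Finset.sum_add_distrib, Finset.sum_sub_distrib,
    ← Finset.mul_sum, ← Finset.mul_sum, ← Finset.mul_sum, ← hd, hQ]
  ring

lemma QQ_one : QQ 1 = 1 := by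
  have h : ∀ π : Equiv.Perm (Fin 1), C ((Equiv.Perm.sign π : ℤ) : ℚ) * (X:ℚ[X]) ^ exc π = 1 := by
    intro π
    have hπ : π = 1 := Equiv.ext fun i => Subsingleton.elim _ _
    subst hπ
    have he : exc (1 : Equiv.Perm (Fin 1)) = 0 := by
      rw [exc]
      simp
    rw [he]
    simp
  rw [QQ, Finset.sum_congr rfl (fun π _ => h π), Finset.sum_const, Finset.card_univ]
  simp

lemma QQ_closed : ∀ n : ℕ, QQ (n + 1) = (1 - X) ^ n := by
  intro n
  induction n with
  | zero => simpa using QQ_one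
  | succ k ih =>
    rw [QQ_rec, ih]
    rw [derivative_pow]
    cases k with
    | zero => simp
    | succ j =>
      rw [Nat.add_sub_cancel]
      have hd : derivative (1 - X : ℚ[X]) = -1 := by simp
      rw [hd]
      simp only [Polynomial.C_eq_natCast]
      push_cast
      ring

def gam : ℕ → ℕ → ℕ
  | 0, _ => 0
  | 1, 0 => 1
  | 1, _ + 1 => 0
  | n + 2, 0 => gam (n + 1) 0
  | n + 2, k + 1 => (k + 2) * gam (n + 1) (k + 1) + (2 * (n + 2) - 4 * (k + 1)) * gam (n + 1) k

lemma gam_supp : ∀ n k : ℕ, n ≤ 2 * k → gam n k = 0 := by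
  intro n
  induction n with
  | zero => intro k _; rfl
  | succ m ih =>
    intro k hk
    match m, k with
    | 0, 0 => omega
    | 0, k + 1 => rfl
    | m + 1, 0 => omega
    | m + 1, k + 1 =>
      show (k + 2) * gam (m + 1) (k + 1) + (2 * (m + 2) - 4 * (k + 1)) * gam (m + 1) k = 0
      have h1 : gam (m + 1) (k + 1) = 0 := ih (k + 1) (by omega)
      rcases Nat.lt_or_ge m (2 * k) with h | h
      · have h2 : gam (m + 1) k = 0 := ih k (by omega)
        rw [h1, h2]; ring
      · have : m = 2 * k ∨ m = 2 * k + 1 := by omega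
        have hc : 2 * (m + 2) - 4 * (k + 1) = 0 ∨ gam (m+1) k = 0 := by
          rcases this with h | h
          · left; omega
          · right; exact ih k (by omega)
        rcases hc with hc | hc <;> rw [h1, hc] <;> ring

lemma gam_zero : ∀ n : ℕ, gam (n + 1) 0 = 1 := by
  intro n
  induction n with
  | zero => rfl
  | succ m ih => exact ih

lemma key_alg (k m : ℕ) :
    (X : ℚ[X]) ^ k * (1 + X) ^ m + C ((2 * k + m + 1 : ℕ) : ℚ) * (X * (X ^ k * (1 + X) ^ m)) +
      (1 - X) * (X * derivative (X ^ k * (1 + X) ^ m)) =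
    C ((k + 1 : ℕ) : ℚ) * (X ^ k * (1 + X) ^ (m + 1)) +
      C ((2 * m : ℕ) : ℚ) * (X ^ (k + 1) * (1 + X) ^ (m - 1)) := by
  have hX : X * derivative ((X : ℚ[X]) ^ k) = C (k : ℚ) * X ^ k := by
    rw [derivative_X_pow]
    cases k with
    | zero => simp
    | succ j => rw [Nat.add_sub_cancel]; push_cast; ring
  have hD : derivative ((1 + X : ℚ[X]) ^ m) = C (m : ℚ) * (1 + X) ^ (m - 1) := by
    rw [derivative_pow]
    simp
  rw [derivative_mul, hD]
  cases m with
  | zero =>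
    simp only [pow_zero, mul_one, Nat.zero_sub, Nat.cast_zero, map_zero, zero_mul, mul_zero,
      add_zero, Nat.cast_ofNat, Nat.mul_zero]
    rw [hX]
    simp only [Polynomial.C_eq_natCast]
    push_cast
    ring
  | succ j =>
    rw [Nat.add_sub_cancel]
    rw [mul_add (X:ℚ[X]), mul_add (1 - X : ℚ[X])]
    rw [show X * (derivative ((X:ℚ[X])^k) * (1+X)^(j+1)) = (X * derivative ((X:ℚ[X])^k)) * (1+X)^(j+1) by ring, hX]
    have h1 : ((1 + X : ℚ[X]) ^ (j + 1)) = (1 + X) ^ j * (1 + X) := pow_succ _ _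
    have h2 : ((1 + X : ℚ[X]) ^ (j + 2)) = (1 + X) ^ j * (1 + X) * (1 + X) := by
      rw [pow_succ, pow_succ]
    simp only [Polynomial.C_eq_natCast, h1, h2]
    push_cast
    ring

lemma PP_one : PP 1 = 1 := by
  have h : ∀ π : Equiv.Perm (Fin 1), (X:ℚ[X]) ^ exc π = 1 := by
    intro π
    have hπ : π = 1 := Equiv.ext fun i => Subsingleton.elim _ _
    subst hπ
    have he : exc (1 : Equiv.Perm (Fin 1)) = 0 := by rw [exc]; simp
    rw [he, pow_zero]
  rw [PP, Finset.sum_congr rfl (fun π _ => h π), Finset.sum_const, Finset.card_univ]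
  simp

lemma PP_closed : ∀ n : ℕ, PP (n + 1) =
    ∑ k ∈ Finset.range (n + 1), C ((gam (n + 1) k : ℚ)) * X ^ k * (1 + X) ^ (n - 2 * k) := by
  intro n
  induction n with
  | zero =>
    rw [PP_one]
    simp [gam_zero 0]
  | succ m ih =>
    rw [PP_rec, ih]
    set g : ℕ → ℕ := gam (m + 1) with hg
    rw [derivative_sum, Finset.mul_sum, Finset.mul_sum, Finset.mul_sum, Finset.mul_sum,
      ← Finset.sum_add_distrib, ← Finset.sum_add_distrib]
    have step : ∀ k ∈ Finset.range (m + 1),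
        C ((g k : ℚ)) * X ^ k * (1 + X) ^ (m - 2 * k) +
          C ((m + 1 : ℕ) : ℚ) * (X * (C ((g k : ℚ)) * X ^ k * (1 + X) ^ (m - 2 * k))) +
          (1 - X) * (X * derivative (C ((g k : ℚ)) * X ^ k * (1 + X) ^ (m - 2 * k))) =
        C (((k + 1) * g k : ℕ) : ℚ) * X ^ k * (1 + X) ^ (m + 1 - 2 * k) +
          C ((2 * (m - 2 * k) * g k : ℕ) : ℚ) * X ^ (k + 1) * (1 + X) ^ (m + 1 - 2 * (k + 1)) := by
      intro k _
      by_cases hzero : g k = 0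
      · rw [hzero]
        simp
      · have hk : 2 * k ≤ m := by
          by_contra hc
          exact hzero (gam_supp (m + 1) k (by omega))
        have hcoeff : (2 * k + (m - 2 * k) + 1 : ℕ) = m + 1 := by omega
        have he1 : m - 2 * k + 1 = m + 1 - 2 * k := by omega
        have he2 : m - 2 * k - 1 = m + 1 - 2 * (k + 1) := by omega
        have hkey := key_alg k (m - 2 * k)
        rw [hcoeff, he1, he2] at hkey
        calc C ((g k : ℚ)) * X ^ k * (1 + X) ^ (m - 2 * k) +
              C ((m + 1 : ℕ) : ℚ) * (X * (C ((g k : ℚ)) * X ^ k * (1 + X) ^ (m - 2 * k))) +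
              (1 - X) * (X * derivative (C ((g k : ℚ)) * X ^ k * (1 + X) ^ (m - 2 * k)))
            = C ((g k : ℚ)) * (X ^ k * (1 + X) ^ (m - 2 * k) +
                C ((m + 1 : ℕ) : ℚ) * (X * (X ^ k * (1 + X) ^ (m - 2 * k))) +
                (1 - X) * (X * derivative (X ^ k * (1 + X) ^ (m - 2 * k)))) := by
              rw [mul_assoc (C ((g k : ℚ))), derivative_C_mul]
              ring
          _ = C ((g k : ℚ)) * (C ((k + 1 : ℕ) : ℚ) * (X ^ k * (1 + X) ^ (m + 1 - 2 * k)) +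
                C ((2 * (m - 2 * k) : ℕ) : ℚ) * (X ^ (k + 1) * (1 + X) ^ (m + 1 - 2 * (k + 1)))) := by
              rw [hkey]
          _ = _ := by
              push_cast
              simp only [map_mul, map_add, map_one, map_ofNat, map_natCast]
              ring
    rw [Finset.sum_congr rfl step, Finset.sum_add_distrib]
    have hR : ∑ j ∈ Finset.range (m + 2), C ((gam (m + 2) j : ℚ)) * X ^ j * (1 + X) ^ (m + 1 - 2 * j) =
        (∑ k ∈ Finset.range (m + 1),
          C (((k + 2) * g (k + 1) : ℕ) : ℚ) * X ^ (k + 1) * (1 + X) ^ (m + 1 - 2 * (k + 1))) +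
        ((∑ k ∈ Finset.range (m + 1),
          C ((2 * (m - 2 * k) * g k : ℕ) : ℚ) * X ^ (k + 1) * (1 + X) ^ (m + 1 - 2 * (k + 1))) +
        C ((g 0 : ℚ)) * X ^ 0 * (1 + X) ^ (m + 1)) := by
      rw [Finset.sum_range_succ']
      have hterm : ∀ k ∈ Finset.range (m + 1),
          C ((gam (m + 2) (k + 1) : ℚ)) * (X:ℚ[X]) ^ (k + 1) * (1 + X) ^ (m + 1 - 2 * (k + 1)) =
          C (((k + 2) * g (k + 1) : ℕ) : ℚ) * X ^ (k + 1) * (1 + X) ^ (m + 1 - 2 * (k + 1)) +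
          C ((2 * (m - 2 * k) * g k : ℕ) : ℚ) * X ^ (k + 1) * (1 + X) ^ (m + 1 - 2 * (k + 1)) := by
        intro k _
        have hgam : gam (m + 2) (k + 1) = (k + 2) * g (k + 1) + 2 * (m - 2 * k) * g k := by
          show (k + 2) * gam (m + 1) (k + 1) + (2 * (m + 2) - 4 * (k + 1)) * gam (m + 1) k = _
          have hc2 : 2 * (m + 2) - 4 * (k + 1) = 2 * (m - 2 * k) := by omega
          rw [hc2]
        rw [hgam]
        push_cast
        simp only [map_mul, map_add, map_one, map_ofNat, map_natCast]
        ring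
      rw [Finset.sum_congr rfl hterm, Finset.sum_add_distrib]
      have h0 : C ((gam (m + 2) 0 : ℚ)) * (X:ℚ[X]) ^ 0 * (1 + X) ^ (m + 1 - 2 * 0) =
          C ((g 0 : ℚ)) * X ^ 0 * (1 + X) ^ (m + 1) := by
        have : gam (m + 2) 0 = g 0 := rfl
        rw [this]
        norm_num
      rw [h0]
      ring
    rw [hR]
    have hu : (∑ k ∈ Finset.range (m + 1),
          C (((k + 1) * g k : ℕ) : ℚ) * (X:ℚ[X]) ^ k * (1 + X) ^ (m + 1 - 2 * k)) =
        (∑ k ∈ Finset.range (m + 1),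
          C (((k + 2) * g (k + 1) : ℕ) : ℚ) * X ^ (k + 1) * (1 + X) ^ (m + 1 - 2 * (k + 1))) +
        C ((g 0 : ℚ)) * X ^ 0 * (1 + X) ^ (m + 1) := by
      rw [Finset.sum_range_succ'
        (fun k => C (((k + 1) * g k : ℕ) : ℚ) * (X:ℚ[X]) ^ k * (1 + X) ^ (m + 1 - 2 * k)) m]
      rw [Finset.sum_range_succ
        (fun k => C (((k + 2) * g (k + 1) : ℕ) : ℚ) * (X:ℚ[X]) ^ (k + 1) * (1 + X) ^ (m + 1 - 2 * (k + 1))) m]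
      have hlast : C (((m + 2) * g (m + 1) : ℕ) : ℚ) * (X:ℚ[X]) ^ (m + 1) * (1 + X) ^ (m + 1 - 2 * (m + 1)) = 0 := by
        have hz : g (m + 1) = 0 := gam_supp (m + 1) (m + 1) (by omega)
        rw [hz]
        simp
      rw [hlast, add_zero]
      have e1 : ∀ k ∈ Finset.range m,
          C ((((k + 1) + 1) * g (k + 1) : ℕ) : ℚ) * (X:ℚ[X]) ^ (k + 1) * (1 + X) ^ (m + 1 - 2 * (k + 1)) =
          C (((k + 2) * g (k + 1) : ℕ) : ℚ) * X ^ (k + 1) * (1 + X) ^ (m + 1 - 2 * (k + 1)) := by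
        intro k _
        have h2 : k + 1 + 1 = k + 2 := by omega
        rw [h2]
      rw [Finset.sum_congr rfl e1]
      have h3 : (0 + 1) * g 0 = g 0 := by omega
      rw [h3]
      norm_num
    rw [hu]
    ring

lemma gam_rec (n k : ℕ) : gam (n + 2) (k + 1) =
    (k + 2) * gam (n + 1) (k + 1) + (2 * (n + 2) - 4 * (k + 1)) * gam (n + 1) k := rfl

lemma gam4 : gam 4 1 = 8 := by decide
lemma gam5_1 : gam 5 1 = 22 := by decide
lemma gam5_2 : gam 5 2 = 16 := by decide

def EvenS (a : ℕ) : Prop :=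
  ∀ k, 4 ^ (k + 1) * (Nat.choose (a - 1) (k + 1) + Nat.choose (a - 2) k) ≤ gam (2 * a) (k + 1)
def OddS (a : ℕ) : Prop := ∀ k, 4 ^ k * Nat.choose a k ≤ gam (2 * a + 1) k

lemma main_ineq : ∀ a, 2 ≤ a → EvenS a ∧ OddS a := by
  intro a
  induction a with
  | zero => omega
  | succ b ihb =>
    intro hb
    rcases Nat.lt_or_ge b 2 with hb2 | hb2
    · -- b + 1 = 2
      have hb1 : b = 1 := by omega
      subst hb1
      constructor
      · intro k
        cases k with
        | zero => rw [show (2 : ℕ) * 2 = 4 by rfl, gam4]; decide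
        | succ j =>
          have h1 : Nat.choose (2 - 1) (j + 1 + 1) = 0 := Nat.choose_eq_zero_of_lt (by omega)
          have h2 : Nat.choose (2 - 2) (j + 1) = 0 := Nat.choose_eq_zero_of_lt (by omega)
          rw [h1, h2]
          simp
      · intro k
        match k with
        | 0 => rw [show (2:ℕ) * 2 + 1 = 5 by rfl, gam_zero 4]; decide
        | 1 => rw [show (2:ℕ) * 2 + 1 = 5 by rfl, gam5_1]; decide
        | 2 => rw [show (2:ℕ) * 2 + 1 = 5 by rfl, gam5_2]; decide
        | (j+3) =>
          have h1 : Nat.choose 2 (j + 3) = 0 := Nat.choose_eq_zero_of_lt (by omega)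
          rw [h1]
          simp
    · -- inductive step, b ≥ 2
      obtain ⟨hE, hO⟩ := ihb hb2
      have hEnew : EvenS (b + 1) := by
        intro k
        have hrw : 2 * (b + 1) = 2 * b + 2 := by omega
        rw [hrw, gam_rec]
        have hcoeff : 2 * (2 * b + 2) - 4 * (k + 1) = 4 * b - 4 * k := by omega
        rw [hcoeff]
        have hO1 := hO (k + 1)
        have hO0 := hO k
        have hsimp1 : b + 1 - 1 = b := by omega
        have hsimp2 : b + 1 - 2 = b - 1 := by omega
        rw [hsimp1, hsimp2]
        have piece1 : 4 ^ (k + 1) * Nat.choose b (k + 1) ≤ (k + 2) * gam (2 * b + 1) (k + 1) := by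
          calc 4 ^ (k + 1) * Nat.choose b (k + 1) ≤ gam (2 * b + 1) (k + 1) := hO1
            _ ≤ (k + 2) * gam (2 * b + 1) (k + 1) := Nat.le_mul_of_pos_left _ (by omega)
        have piece2 : 4 ^ (k + 1) * Nat.choose (b - 1) k ≤ (4 * b - 4 * k) * gam (2 * b + 1) k := by
          rcases Nat.lt_or_ge k b with hk | hk
          · have h4 : 4 ≤ 4 * b - 4 * k := by omega
            have hcc : Nat.choose (b - 1) k ≤ Nat.choose b k := Nat.choose_le_choose k (by omega)
            calc 4 ^ (k + 1) * Nat.choose (b - 1) k = 4 * (4 ^ k * Nat.choose (b - 1) k) := by ring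
              _ ≤ (4 * b - 4 * k) * (4 ^ k * Nat.choose b k) := by
                  apply Nat.mul_le_mul h4
                  exact Nat.mul_le_mul_left _ hcc
              _ ≤ (4 * b - 4 * k) * gam (2 * b + 1) k := Nat.mul_le_mul_left _ hO0
          · have : Nat.choose (b - 1) k = 0 := Nat.choose_eq_zero_of_lt (by omega)
            rw [this]
            simp
        calc 4 ^ (k + 1) * (Nat.choose b (k + 1) + Nat.choose (b - 1) k)
            = 4 ^ (k + 1) * Nat.choose b (k + 1) + 4 ^ (k + 1) * Nat.choose (b - 1) k := by ring
          _ ≤ (k + 2) * gam (2 * b + 1) (k + 1) + (4 * b - 4 * k) * gam (2 * b + 1) k :=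
              Nat.add_le_add piece1 piece2
      refine ⟨hEnew, ?_⟩
      intro k
      have hrw : 2 * (b + 1) + 1 = (2 * b + 1) + 2 := by omega
      rw [hrw]
      cases k with
      | zero =>
        have : gam (2 * b + 1 + 2) 0 = 1 := gam_zero (2 * b + 2)
        rw [this]
        simp
      | succ j =>
        rw [gam_rec]
        have hcoeff : 2 * (2 * b + 1 + 2) - 4 * (j + 1) = 4 * b + 2 - 4 * j := by omega
        rw [hcoeff]
        have hchoose : Nat.choose (b + 1) (j + 1) = Nat.choose b j + Nat.choose b (j + 1) :=
          Nat.choose_succ_succ b j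
        rw [hchoose]
        have hEj1 := hEnew j
        have hrw2 : 2 * (b + 1) = 2 * b + 2 := by omega
        rw [hrw2] at hEj1
        have hsimp1 : b + 1 - 1 = b := by omega
        have hsimp2 : b + 1 - 2 = b - 1 := by omega
        rw [hsimp1, hsimp2] at hEj1
        -- hEj1 : 4^(j+1) * (choose b (j+1) + choose (b-1) j) ≤ gam (2b+2) (j+1)
        have piece1 : 4 ^ (j + 1) * (Nat.choose b (j + 1) + Nat.choose (b - 1) j) ≤
            (j + 2) * gam (2 * b + 1 + 1) (j + 1) := by
          have : (2 : ℕ) * b + 1 + 1 = 2 * b + 2 := by omega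
          rw [this]
          calc 4 ^ (j + 1) * (Nat.choose b (j + 1) + Nat.choose (b - 1) j) ≤ gam (2 * b + 2) (j + 1) := hEj1
            _ ≤ (j + 2) * gam (2 * b + 2) (j + 1) := Nat.le_mul_of_pos_left _ (by omega)
        have piece2 : 4 ^ (j + 1) * Nat.choose b j ≤
            4 ^ (j + 1) * Nat.choose (b - 1) j + (4 * b + 2 - 4 * j) * gam (2 * b + 1 + 1) j := by
          have hrw3 : (2 : ℕ) * b + 1 + 1 = 2 * b + 2 := by omega
          rw [hrw3]
          cases j with
          | zero =>
            have hg0 : gam (2 * b + 2) 0 = 1 := gam_zero (2 * b + 1)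
            rw [hg0, Nat.choose_zero_right, Nat.choose_zero_right]
            omega
          | succ i =>
            have hcb : Nat.choose b (i + 1) =
                Nat.choose (b - 1) (i + 1) + Nat.choose (b - 1) i := by
              have hb' : b = (b - 1) + 1 := by omega
              calc Nat.choose b (i + 1) = Nat.choose ((b - 1) + 1) (i + 1) := by rw [← hb']
                _ = Nat.choose (b - 1) i + Nat.choose (b - 1) (i + 1) := Nat.choose_succ_succ _ _
                _ = Nat.choose (b - 1) (i + 1) + Nat.choose (b - 1) i := by ring
            rw [hcb]
            have hrest : 4 ^ (i + 1 + 1) * Nat.choose (b - 1) i ≤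
                (4 * b + 2 - 4 * (i + 1)) * gam (2 * b + 2) (i + 1) := by
              have hEi := hEnew i
              rw [hrw2, hsimp1, hsimp2] at hEi
              rcases Nat.lt_or_ge (i + 1) b with hib | hib
              · have h4 : 4 ≤ 4 * b + 2 - 4 * (i + 1) := by omega
                calc 4 ^ (i + 1 + 1) * Nat.choose (b - 1) i
                    = 4 * (4 ^ (i + 1) * Nat.choose (b - 1) i) := by ring
                  _ ≤ 4 * (4 ^ (i + 1) * (Nat.choose b (i + 1) + Nat.choose (b - 1) i)) := by
                      apply Nat.mul_le_mul_left
                      apply Nat.mul_le_mul_left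
                      omega
                  _ ≤ 4 * gam (2 * b + 2) (i + 1) := Nat.mul_le_mul_left _ hEi
                  _ ≤ (4 * b + 2 - 4 * (i + 1)) * gam (2 * b + 2) (i + 1) :=
                      Nat.mul_le_mul_right _ h4
              · rcases Nat.lt_or_ge i b with hib2 | hib2
                · have hbi : b = i + 1 := by omega
                  have hcoeff2 : 4 * b + 2 - 4 * (i + 1) = 2 := by omega
                  rw [hcoeff2]
                  have hcc1 : Nat.choose b (i + 1) = 1 := by rw [hbi, Nat.choose_self]
                  have hcc2 : Nat.choose (b - 1) i = 1 := by
                    rw [hbi, Nat.succ_sub_one, Nat.choose_self]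
                  rw [hcc1, hcc2] at hEi
                  rw [hcc2]
                  calc 4 ^ (i + 1 + 1) * 1 = 2 * (4 ^ (i + 1) * (1 + 1)) := by ring
                    _ ≤ 2 * gam (2 * b + 2) (i + 1) := Nat.mul_le_mul_left _ hEi
                · have hz : Nat.choose (b - 1) i = 0 := Nat.choose_eq_zero_of_lt (by omega)
                  rw [hz]
                  simp
            calc 4 ^ (i + 1 + 1) * (Nat.choose (b - 1) (i + 1) + Nat.choose (b - 1) i)
                = 4 ^ (i + 1 + 1) * Nat.choose (b - 1) (i + 1) +
                  4 ^ (i + 1 + 1) * Nat.choose (b - 1) i := by ring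
              _ ≤ 4 ^ (i + 1 + 1) * Nat.choose (b - 1) (i + 1) +
                  (4 * b + 2 - 4 * (i + 1)) * gam (2 * b + 2) (i + 1) :=
                  Nat.add_le_add_left hrest _
        nlinarith [piece1, piece2]

lemma sign_not_one {n : ℕ} (π : Equiv.Perm (Fin n)) :
    (¬ Equiv.Perm.sign π = 1) ↔ Equiv.Perm.sign π = -1 := by
  rcases Int.units_eq_one_or (Equiv.Perm.sign π) with h | h <;> simp [h]

lemma split_add (n : ℕ) :
    ((∑ π ∈ (Finset.univ.filter fun π : Equiv.Perm (Fin n) => Equiv.Perm.sign π = 1),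
        (X:ℚ[X]) ^ exc π) +
      ∑ π ∈ (Finset.univ.filter fun π : Equiv.Perm (Fin n) => Equiv.Perm.sign π = -1),
        (X:ℚ[X]) ^ exc π) = PP n := by
  rw [PP, ← Finset.sum_filter_add_sum_filter_not Finset.univ
    (fun π : Equiv.Perm (Fin n) => Equiv.Perm.sign π = 1)]
  congr 1
  apply Finset.sum_congr _ (fun _ _ => rfl)
  apply Finset.filter_congr
  intro π _
  exact (sign_not_one π).symm

lemma split_sub (n : ℕ) :
    ((∑ π ∈ (Finset.univ.filter fun π : Equiv.Perm (Fin n) => Equiv.Perm.sign π = 1),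
        (X:ℚ[X]) ^ exc π) -
      ∑ π ∈ (Finset.univ.filter fun π : Equiv.Perm (Fin n) => Equiv.Perm.sign π = -1),
        (X:ℚ[X]) ^ exc π) = QQ n := by
  rw [QQ, ← Finset.sum_filter_add_sum_filter_not Finset.univ
    (fun π : Equiv.Perm (Fin n) => Equiv.Perm.sign π = 1)]
  have h1 : ∀ π ∈ Finset.univ.filter fun π : Equiv.Perm (Fin n) => Equiv.Perm.sign π = 1,
      C ((Equiv.Perm.sign π : ℤ) : ℚ) * (X:ℚ[X]) ^ exc π = X ^ exc π := by
    intro π hπ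
    rw [Finset.mem_filter] at hπ
    rw [hπ.2]
    norm_num
  have h2 : ∀ π ∈ Finset.univ.filter fun π : Equiv.Perm (Fin n) => ¬ Equiv.Perm.sign π = 1,
      C ((Equiv.Perm.sign π : ℤ) : ℚ) * (X:ℚ[X]) ^ exc π = -(X ^ exc π) := by
    intro π hπ
    rw [Finset.mem_filter] at hπ
    rw [(sign_not_one π).mp hπ.2]
    norm_num
  rw [Finset.sum_congr rfl h1, Finset.sum_congr rfl h2, Finset.sum_neg_distrib]
  have h3 : (Finset.univ.filter fun π : Equiv.Perm (Fin n) => ¬ Equiv.Perm.sign π = 1) =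
      (Finset.univ.filter fun π : Equiv.Perm (Fin n) => Equiv.Perm.sign π = -1) := by
    apply Finset.filter_congr
    intro π _
    exact sign_not_one π
  rw [h3]
  ring

lemma neg_expand (m : ℕ) : ((1 - X : ℚ[X])) ^ (2 * m) =
    ∑ k ∈ Finset.range (m + 1),
      C ((Nat.choose m k : ℚ) * (-4) ^ k) * X ^ k * (1 + X) ^ (2 * m - 2 * k) := by
  have h2 : (1 - X : ℚ[X]) ^ 2 = C (-4) * X + (1 + X) ^ 2 := by
    have : C (-4 : ℚ) = -(4 : ℚ[X]) := by
      rw [map_neg, map_ofNat]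
    rw [this]
    ring
  rw [pow_mul, h2, add_pow]
  refine Finset.sum_congr rfl fun k hk => ?_
  rw [Finset.mem_range] at hk
  have hk' : k ≤ m := by omega
  rw [mul_pow, ← map_pow, ← pow_mul]
  have he : 2 * (m - k) = 2 * m - 2 * k := by omega
  rw [he]
  push_cast
  simp only [map_mul, map_neg, map_ofNat, map_natCast, map_pow]
  ring

theorem stmt16 (n : ℕ) (hn : 5 ≤ n) (hodd : Odd n) :
    GammaPositive (∑ π ∈ (Finset.univ.filter fun π : Equiv.Perm (Fin n) => Equiv.Perm.sign π = 1),
        X ^ exc π) (((n : ℚ) - 1) / 2) ∧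
    GammaPositive (∑ π ∈ (Finset.univ.filter fun π : Equiv.Perm (Fin n) => Equiv.Perm.sign π = -1),
        X ^ exc π) (((n : ℚ) - 1) / 2) := by
  obtain ⟨m, hm⟩ := hodd
  have hm2 : 2 ≤ m := by omega
  have hO := (main_ineq m hm2).2
  have hPP : PP n = ∑ k ∈ Finset.range (m + 1),
      C ((gam n k : ℚ)) * X ^ k * (1 + X) ^ (2 * m - 2 * k) := by
    rw [hm, PP_closed (2 * m)]
    refine (Finset.sum_subset (Finset.range_subset_range.mpr (by omega)) ?_).symm
    intro k _ hk
    rw [Finset.mem_range, not_lt] at hk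
    have : gam (2 * m + 1) k = 0 := gam_supp _ _ (by omega)
    rw [this]
    simp
  have hQQ : QQ n = ∑ k ∈ Finset.range (m + 1),
      C ((Nat.choose m k : ℚ) * (-4) ^ k) * X ^ k * (1 + X) ^ (2 * m - 2 * k) := by
    rw [hm, QQ_closed (2 * m), neg_expand]
  have hadd := split_add n
  have hsubq := split_sub n
  set f1 := ∑ π ∈ (Finset.univ.filter fun π : Equiv.Perm (Fin n) => Equiv.Perm.sign π = 1),
      (X:ℚ[X]) ^ exc π with hf1def
  set f2 := ∑ π ∈ (Finset.univ.filter fun π : Equiv.Perm (Fin n) => Equiv.Perm.sign π = -1),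
      (X:ℚ[X]) ^ exc π with hf2def
  have h2f1 : (2 : ℚ[X]) * f1 = PP n + QQ n := by
    rw [← hadd, ← hsubq]; ring
  have h2f2 : (2 : ℚ[X]) * f2 = PP n - QQ n := by
    rw [← hadd, ← hsubq]; ring
  have hhalf : (C (1/2 : ℚ)) * (2 : ℚ[X]) = 1 := by
    rw [show (2 : ℚ[X]) = C (2 : ℚ) from (map_ofNat C 2).symm, ← map_mul]
    norm_num
  have hf1 : f1 = C (1/2 : ℚ) * (PP n + QQ n) := by
    calc f1 = (C (1/2 : ℚ) * 2) * f1 := by rw [hhalf, one_mul]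
      _ = C (1/2 : ℚ) * (2 * f1) := by ring
      _ = _ := by rw [h2f1]
  have hf2 : f2 = C (1/2 : ℚ) * (PP n - QQ n) := by
    calc f2 = (C (1/2 : ℚ) * 2) * f2 := by rw [hhalf, one_mul]
      _ = C (1/2 : ℚ) * (2 * f2) := by ring
      _ = _ := by rw [h2f2]
  have hineq : ∀ i, (Nat.choose m i : ℚ) * 4 ^ i ≤ (gam n i : ℚ) := by
    intro i
    have := hO i
    rw [← hm] at this
    have h := Nat.cast_le (α := ℚ) |>.mpr this
    push_cast at h
    linarith
  have hrange : (2 * m - 0) / 2 + 1 = m + 1 := by omega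
  constructor
  · refine ⟨2 * m, 0, by omega, by rw [hm]; push_cast; ring,
      fun i => ((gam n i : ℚ) + (Nat.choose m i : ℚ) * (-4) ^ i) / 2, ?_, ?_⟩
    · intro i
      dsimp only
      rcases Nat.even_or_odd i with hi | hi
      · have : ((-4 : ℚ)) ^ i = 4 ^ i := by
          rw [show (-4 : ℚ) = -4 from rfl, hi.neg_pow]
        rw [this]
        positivity
      · have : ((-4 : ℚ)) ^ i = -(4 ^ i) := hi.neg_pow 4
        rw [this]
        have := hineq i
        have hg : (0:ℚ) ≤ (gam n i : ℚ) := by positivity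
        nlinarith [hineq i]
    · rw [hf1, hPP, hQQ, ← Finset.sum_add_distrib, Finset.mul_sum, hrange]
      refine Finset.sum_congr rfl fun k _ => ?_
      rw [Nat.zero_add, Nat.sub_zero]
      rw [show C (((gam n k : ℚ) + (Nat.choose m k : ℚ) * (-4) ^ k) / 2) =
        C (1/2 : ℚ) * (C ((gam n k : ℚ)) + C ((Nat.choose m k : ℚ) * (-4) ^ k)) by
          rw [← C_add, ← C_mul]; congr 1; ring]
      ring
  · refine ⟨2 * m, 0, by omega, by rw [hm]; push_cast; ring,
      fun i => ((gam n i : ℚ) - (Nat.choose m i : ℚ) * (-4) ^ i) / 2, ?_, ?_⟩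
    · intro i
      dsimp only
      rcases Nat.even_or_odd i with hi | hi
      · have : ((-4 : ℚ)) ^ i = 4 ^ i := by
          rw [show (-4 : ℚ) = -4 from rfl, hi.neg_pow]
        rw [this]
        nlinarith [hineq i]
      · have : ((-4 : ℚ)) ^ i = -(4 ^ i) := hi.neg_pow 4
        rw [this]
        have hg : (0:ℚ) ≤ (gam n i : ℚ) := by positivity
        have hc : (0:ℚ) ≤ (Nat.choose m i : ℚ) * 4 ^ i := by positivity
        nlinarith
    · rw [hf2, hPP, hQQ, ← Finset.sum_sub_distrib, Finset.mul_sum, hrange]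
      refine Finset.sum_congr rfl fun k _ => ?_
      rw [Nat.zero_add, Nat.sub_zero]
      rw [show C (((gam n k : ℚ) - (Nat.choose m k : ℚ) * (-4) ^ k) / 2) =
        C (1/2 : ℚ) * (C ((gam n k : ℚ)) - C ((Nat.choose m k : ℚ) * (-4) ^ k)) by
          rw [← C_sub, ← C_mul]; congr 1; ring]
      ring
end

section
/- For every positive integer n, ∑_{π ∈ S_n} sgn(π) · t^{exc(π)} = (1 - t)^{n-1} as polynomials in ℚ[t], where the sum is over all permutations of {1,...,n}. -/
open Polynomial Finset

theorem stmt17 (n : ℕ) (hn : 0 < n) :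
    ∑ π : Equiv.Perm (Fin n), ((Equiv.Perm.sign π : ℤ) : ℚ[X]) * X ^ exc π
      = (1 - X) ^ (n - 1) := by
  obtain ⟨m, rfl⟩ : ∃ m, n = m + 1 := ⟨n - 1, (Nat.succ_pred_eq_of_pos hn).symm⟩
  set M : Matrix (Fin (m+1)) (Fin (m+1)) ℚ[X] :=
    Matrix.of fun a b => if b < a then X else 1 with hM
  set M' : Matrix (Fin (m+1)) (Fin (m+1)) ℚ[X] :=
    Matrix.of fun a b => if a = 0 then 1 else if b < a then X - 1 else 0 with hM'
  set E : Matrix (Fin (m+1)) (Fin (m+1)) ℚ[X] :=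
    Matrix.of fun a b => if a = b then 1 else if b = 0 then -1 else 0 with hE
  -- Step 1: the sum is det M
  have h1 : ∑ π : Equiv.Perm (Fin (m+1)), ((Equiv.Perm.sign π : ℤ) : ℚ[X]) * X ^ exc π
      = M.det := by
    rw [Matrix.det_apply']
    refine Finset.sum_congr rfl fun σ _ => ?_
    congr 1
    have : ∀ i, M (σ i) i = if σ i > i then X else 1 := fun i => rfl
    simp_rw [this]
    rw [Finset.prod_ite, Finset.prod_const, Finset.prod_const_one, mul_one]
    rfl
  -- Step 2: E * M = M'
  have hEM : E * M = M' := by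
    apply Matrix.ext
    intro a b
    rw [Matrix.mul_apply]
    by_cases ha : a = 0
    · subst ha
      have : ∀ k, E (0 : Fin (m+1)) k * M k b = if k = 0 then M 0 b else 0 := by
        intro k
        rcases eq_or_ne k 0 with rfl | hk
        · simp [hE]
        · simp [hE, hk, Ne.symm hk]
      simp_rw [this]
      rw [Finset.sum_ite_eq' Finset.univ (0 : Fin (m+1)) (fun _ => M 0 b)]
      simp [hM, hM', Fin.not_lt_zero]
    · have : ∀ k, E a k * M k b =
          (if k = a then M a b else 0) + (if k = 0 then -(M 0 b) else 0) := by
        intro k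
        rcases eq_or_ne k a with rfl | hk
        · simp [hE, ha]
        · rcases eq_or_ne k 0 with rfl | hk0
          · simp [hE, Ne.symm hk, hk]
          · simp [hE, hk, hk0, Ne.symm hk]
      simp_rw [this]
      rw [Finset.sum_add_distrib, Finset.sum_ite_eq' Finset.univ a (fun _ => M a b),
        Finset.sum_ite_eq' Finset.univ (0 : Fin (m+1)) (fun _ => -(M 0 b))]
      simp only [Finset.mem_univ, if_true]
      have hM0b : M 0 b = 1 := by simp [hM, Fin.not_lt_zero]
      rw [hM0b]
      simp only [hM, hM', Matrix.of_apply, ha, if_false]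
      split_ifs <;> ring
  -- Step 3: det E = 1
  have hdetE : E.det = 1 := by
    have ht : E.BlockTriangular OrderDual.toDual := by
      intro i j hij
      have hij' : i < j := hij
      have hj0 : j ≠ 0 := by
        intro h; subst h; exact absurd hij' (Fin.not_lt_zero i)
      simp [hE, ne_of_lt hij', hj0]
    rw [Matrix.det_of_lowerTriangular E ht]
    simp [hE]
  -- Step 4: det of the row-rotated M' is (X-1)^m
  have hN : (M'.submatrix (finRotate (m+1)) id).det = (X - 1) ^ m := by
    have ht : (M'.submatrix (finRotate (m+1)) id).BlockTriangular OrderDual.toDual := by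
      intro i j hij
      have hij' : i < j := hij
      have hlast : i < Fin.last m := lt_of_lt_of_le hij' (Fin.le_last j)
      have hval : ((i + 1 : Fin (m+1)) : ℕ) = (i : ℕ) + 1 := Fin.val_add_one_of_lt hlast
      have hne : (i + 1 : Fin (m+1)) ≠ 0 := by
        intro h; rw [h] at hval; simp at hval
      have hnlt : ¬ j < i + 1 := by
        rw [not_lt, Fin.le_def, hval]; exact hij'
      rw [Matrix.submatrix_apply, finRotate_succ_apply, id]
      simp [hM', hne, hnlt]
    rw [Matrix.det_of_lowerTriangular _ ht, Fin.prod_univ_castSucc]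
    have h2 : (M'.submatrix (finRotate (m+1)) id) (Fin.last m) (Fin.last m) = 1 := by
      rw [Matrix.submatrix_apply, finRotate_last]
      simp [hM']
    rw [h2, mul_one]
    have key : ∀ i : Fin m, (M'.submatrix (finRotate (m+1)) id) i.castSucc i.castSucc
        = X - 1 := by
      intro i
      have hval : ((i.castSucc + 1 : Fin (m+1)) : ℕ) = (i.castSucc : ℕ) + 1 :=
        Fin.val_add_one_of_lt (Fin.castSucc_lt_last i)
      have hne : (i.castSucc + 1 : Fin (m+1)) ≠ 0 := by
        intro h; rw [h] at hval; simp at hval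
      have hlt : (i.castSucc : Fin (m+1)) < i.castSucc + 1 := by
        rw [Fin.lt_def, hval]; omega
      rw [Matrix.submatrix_apply, finRotate_succ_apply, id]
      simp [hM', hne, hlt, Fin.succ_ne_zero]
    rw [Finset.prod_congr rfl fun i _ => key i, Finset.prod_const, Finset.card_univ,
      Fintype.card_fin]
  -- Step 5: det M' = (1-X)^m
  have hdetM' : M'.det = (1 - X) ^ m := by
    have h := Matrix.det_permute (finRotate (m+1)) M'
    rw [hN, sign_finRotate, Nat.add_sub_cancel] at h
    have hcast : ((((-1 : ℤˣ) ^ m : ℤˣ) : ℤ) : ℚ[X]) = (-1 : ℚ[X]) ^ m := by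
      push_cast; ring
    rw [hcast] at h
    have hc : ((-1 : ℚ[X]) ^ m) * ((-1 : ℚ[X]) ^ m) = 1 := by
      rw [← pow_add, ← two_mul, pow_mul]; norm_num
    have h1x : (1 - X : ℚ[X]) ^ m = (-1 : ℚ[X]) ^ m * (X - 1) ^ m := by
      rw [← mul_pow]; ring_nf
    calc M'.det = ((-1 : ℚ[X]) ^ m * (-1 : ℚ[X]) ^ m) * M'.det := by rw [hc, one_mul]
      _ = (-1 : ℚ[X]) ^ m * ((-1 : ℚ[X]) ^ m * M'.det) := by ring
      _ = (-1 : ℚ[X]) ^ m * (X - 1) ^ m := by rw [← h]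
      _ = (1 - X) ^ m := h1x.symm
  rw [h1]
  have hMM' : M.det = M'.det := by
    rw [← hEM, Matrix.det_mul, hdetE, one_mul]
  rw [hMM', hdetM', Nat.add_sub_cancel]
end

section
/- For every integer n ≥ 2, the signed excedance enumerator over derangements satisfies ∑_{π ∈ D_n} sgn(π) · t^{exc(π)} = (-1)^{n-1} · t · [n-1]_t as polynomials in ℚ[t], where D_n is the set of derangements of {1,...,n}. -/
open Polynomial Finset Matrix

/-- Mod-k-alternating derangements: elements of `MP n k r` with no fixed point. -/
def MPD (n k r : ℕ) : Finset (Equiv.Perm (Fin n)) :=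
  (MP n k r).filter fun π => ∀ i : Fin n, π i ≠ i

/-- The q-analogue `[m]_t = 1 + t + ⋯ + t^(m-1)` as a polynomial in `ℚ[X]`. -/
noncomputable def qnat (m : ℕ) : ℚ[X] := ∑ i ∈ Finset.range m, X ^ i

noncomputable def Mm (n : ℕ) : Matrix (Fin n) (Fin n) ℚ[X] :=
  fun i j => if (i:ℕ) = (j:ℕ) then 0 else if (i:ℕ) < (j:ℕ) then X else 1

noncomputable def Bm (n : ℕ) : Matrix (Fin n) (Fin n) ℚ[X] :=
  fun i j => if (i:ℕ) + 1 = n then (if (j:ℕ) + 1 = n then 0 else 1)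
    else if (j:ℕ) = (i:ℕ) then -1 else if (j:ℕ) = (i:ℕ) + 1 then X else 0

noncomputable def Em (n : ℕ) : Matrix (Fin n) (Fin n) ℚ[X] :=
  fun i j => if (j:ℕ) = (i:ℕ) then 1 else if (j:ℕ) = (i:ℕ) + 1 then -1 else 0

lemma EM (n : ℕ) : Em n * Mm n = Bm n := by
  apply Matrix.ext
  intro i j
  have hi := i.isLt; have hj := j.isLt
  rw [Matrix.mul_apply]
  have hrow : ∀ k : Fin n, Em n i k * Mm n k j
      = (if k = i then Mm n k j else 0) + (if (k:ℕ) = (i:ℕ)+1 then -Mm n k j else 0) := by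
    intro k
    simp only [Em, Fin.ext_iff]
    split_ifs <;> first | ring1 | (exfalso; omega)
  rw [Finset.sum_congr rfl fun k _ => hrow k, Finset.sum_add_distrib,
      Finset.sum_ite_eq' Finset.univ]
  simp only [Finset.mem_univ, if_true]
  by_cases h : (i:ℕ) + 1 < n
  · have h2 : ∑ k : Fin n, (if (k:ℕ) = (i:ℕ)+1 then -Mm n k j else 0)
        = -Mm n ⟨(i:ℕ)+1, h⟩ j := by
      rw [Finset.sum_eq_single (⟨(i:ℕ)+1, h⟩ : Fin n)]
      · simp
      · intro k _ hk
        rw [if_neg]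
        simpa [Fin.ext_iff] using hk
      · simp
    rw [h2]
    simp only [Mm, Bm]
    split_ifs <;> first | ring1 | (exfalso; omega)
  · have h2 : ∑ k : Fin n, (if (k:ℕ) = (i:ℕ)+1 then -Mm n k j else 0) = 0 := by
      apply Finset.sum_eq_zero
      intro k _
      rw [if_neg]
      have := k.isLt; omega
    rw [h2]
    simp only [Mm, Bm]
    split_ifs <;> first | ring1 | (exfalso; omega)

lemma detEm (n : ℕ) : (Em n).det = 1 := by
  have h : (Em n).BlockTriangular id := by
    intro i j hij
    have : (j:ℕ) < (i:ℕ) := hij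
    simp only [Em]
    rw [if_neg (by omega), if_neg (by omega)]
  rw [Matrix.det_of_upperTriangular h]
  apply Finset.prod_eq_one
  intro i _
  simp [Em]

lemma detBm_succ (n : ℕ) (hn : 1 ≤ n) :
    (Bm (n+1)).det = -(Bm n).det + (-1:ℚ[X])^n * X^n := by
  rw [Matrix.det_succ_column_zero]
  have key : ∀ x : Fin (n+1), x ∉ ({0, Fin.last n} : Finset (Fin (n+1))) →
      (-1:ℚ[X])^(x:ℕ) * Bm (n+1) x 0 * ((Bm (n+1)).submatrix x.succAbove Fin.succ).det = 0 := by
    intro x hx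
    simp only [Finset.mem_insert, Finset.mem_singleton] at hx
    push_neg at hx
    have h1 : (x:ℕ) ≠ 0 := fun h => hx.1 (Fin.ext h)
    have h2 : (x:ℕ) ≠ n := fun h => hx.2 (Fin.ext (by simpa using h))
    have hBm : Bm (n+1) x 0 = 0 := by
      simp only [Bm, Fin.val_zero]
      split_ifs <;> first | rfl | (exfalso; omega)
    rw [hBm, mul_zero, zero_mul]
  rw [← Finset.sum_subset (Finset.subset_univ {0, Fin.last n}) (fun x _ hx => key x hx),
    Finset.sum_pair (by simp [Fin.ext_iff]; omega : (0 : Fin (n+1)) ≠ Fin.last n)]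
  have hB00 : Bm (n+1) 0 0 = -1 := by
    simp only [Bm, Fin.val_zero]
    rw [if_neg (by omega)]
    simp
  have hBl0 : Bm (n+1) (Fin.last n) 0 = 1 := by
    simp only [Bm, Fin.val_last, Fin.val_zero]
    simpa using (show n ≠ 0 by omega)
  have hsub0 : (Bm (n+1)).submatrix (0 : Fin (n+1)).succAbove Fin.succ = Bm n := by
    apply Matrix.ext
    intro i j
    have hi := i.isLt; have hj := j.isLt
    simp only [Matrix.submatrix_apply, Fin.succAbove_zero, Bm, Fin.val_succ]
    split_ifs <;> first | ring1 | (exfalso; omega)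
  have hsubl : ((Bm (n+1)).submatrix (Fin.last n).succAbove Fin.succ).det = X^n := by
    have hlow : ((Bm (n+1)).submatrix (Fin.last n).succAbove Fin.succ).BlockTriangular
        OrderDual.toDual := by
      intro i j hij
      have hij' : (i:ℕ) < (j:ℕ) := hij
      have hi := i.isLt
      simp only [Matrix.submatrix_apply, Fin.succAbove_last, Bm, Fin.val_succ, Fin.coe_castSucc]
      rw [if_neg (by omega), if_neg (by omega), if_neg (by omega)]
    rw [Matrix.det_of_lowerTriangular _ hlow]
    rw [Finset.prod_congr rfl (fun i _ => ?_), Finset.prod_const, Finset.card_univ,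
      Fintype.card_fin]
    have hi := i.isLt
    simp only [Matrix.submatrix_apply, Fin.succAbove_last, Bm, Fin.val_succ, Fin.coe_castSucc]
    rw [if_neg (by omega), if_neg (by omega)]
    simp
  rw [hB00, hBl0, hsub0, hsubl]
  simp only [Fin.val_zero, Fin.val_last, pow_zero]
  ring

lemma detBm (n : ℕ) : (Bm (n+1)).det = (-1:ℚ[X])^n * ∑ i ∈ Finset.range n, X^(i+1) := by
  induction n with
  | zero =>
    rw [Matrix.det_fin_one]
    simp [Bm]
  | succ m ih =>
    rw [detBm_succ (m+1) (by omega), ih, Finset.sum_range_succ]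
    ring
lemma detMm (n : ℕ) : (Mm n).det = (Bm n).det := by
  rw [← EM n, Matrix.det_mul, detEm, one_mul]

lemma sum_eq_detMm (n : ℕ) :
    ∑ π ∈ (Finset.univ.filter fun π : Equiv.Perm (Fin n) => ∀ i : Fin n, π i ≠ i),
        ((Equiv.Perm.sign π : ℤ) : ℚ[X]) * X ^ exc π
      = (Mm n).det := by
  rw [← Matrix.det_transpose (Mm n), Matrix.det_apply']
  rw [← Finset.sum_subset (Finset.filter_subset (fun π : Equiv.Perm (Fin n) => ∀ i : Fin n, π i ≠ i) Finset.univ) ?zero]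
  case zero =>
    intro σ _ hσ
    simp only [Finset.mem_filter, Finset.mem_univ, true_and, not_forall, not_not] at hσ
    obtain ⟨i0, hi0⟩ := hσ
    have : (Mm n)ᵀ (σ i0) i0 = 0 := by
      rw [Matrix.transpose_apply, hi0]
      simp [Mm]
    exact mul_eq_zero_of_right _ (Finset.prod_eq_zero (Finset.mem_univ i0) this)
  apply Finset.sum_congr rfl
  intro σ hσ
  simp only [Finset.mem_filter, Finset.mem_univ, true_and] at hσ
  congr 1
  have h1 : ∀ i : Fin n, (Mm n)ᵀ (σ i) i = if (i:ℕ) < ((σ i):ℕ) then X else 1 := by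
    intro i
    rw [Matrix.transpose_apply]
    simp only [Mm]
    rw [if_neg (fun h => hσ i (Fin.ext h.symm))]
  rw [Finset.prod_congr rfl (fun i _ => h1 i), Finset.prod_ite, Finset.prod_const,
    Finset.prod_const, one_pow, mul_one]
  unfold exc
  congr 2

theorem stmt18 (n : ℕ) (hn : 2 ≤ n) :
    ∑ π ∈ (Finset.univ.filter fun π : Equiv.Perm (Fin n) => ∀ i : Fin n, π i ≠ i),
        ((Equiv.Perm.sign π : ℤ) : ℚ[X]) * X ^ exc π
      = (-1) ^ (n - 1) * X * qnat (n - 1) := by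
  obtain ⟨m, rfl⟩ : ∃ m, n = m + 1 := ⟨n - 1, by omega⟩
  rw [sum_eq_detMm, detMm, detBm]
  simp only [Nat.add_sub_cancel]
  rw [qnat, Finset.mul_sum, Finset.mul_sum]
  apply Finset.sum_congr rfl
  intro i _
  ring
end

section
/- For every positive integer n, the signed descent enumerator SgnDes_n(t) = ∑_{π ∈ S_n} sgn(π) · t^{des(π)} satisfies: SgnDes_n(t) = (1-t)^m · A_m(t) if n = 2m, and SgnDes_n(t) = (1-t)^m · A_{m+1}(t) if n = 2m+1, as polynomials in ℚ[t]. -/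
open Polynomial Finset

/-- Number of descents of a permutation of `Fin n`: indices `i` with `i + 1 < n` and
`π (i+1) < π i`. -/
def des {n : ℕ} (π : Equiv.Perm (Fin n)) : ℕ :=
  (Finset.univ.filter fun i : Fin n =>
    (i : ℕ) + 1 < n ∧ π ⟨((i : ℕ) + 1) % n, Nat.mod_lt _ i.pos⟩ < π i).card

/-- The Eulerian polynomial `A_m(t) = ∑_{π ∈ S_m} t^(des π)`. -/
noncomputable def Eulerian (m : ℕ) : ℚ[X] :=
  ∑ π : Equiv.Perm (Fin m), X ^ des π

namespace SgnDesAux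


def invw {n : ℕ} {α : Type*} [LinearOrder α] (f : Fin n → α) : ℕ :=
  (Finset.univ.filter fun p : Fin n × Fin n => p.1 < p.2 ∧ f p.2 < f p.1).card

def cnt {n : ℕ} {α : Type*} [LinearOrder α] (a : α) (f : Fin n → α) : ℕ :=
  (Finset.univ.filter fun j => f j < a).card

lemma sign_eq_signAux {n : ℕ} (π : Equiv.Perm (Fin n)) :
    Equiv.Perm.sign π = Equiv.Perm.signAux π := by
  refine Equiv.Perm.swap_induction_on π ?_ ?_
  · simp [Equiv.Perm.signAux_one]
  · intro f x y hxy ih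
    rw [Equiv.Perm.sign_mul, Equiv.Perm.signAux_mul, Equiv.Perm.sign_swap hxy,
      Equiv.Perm.signAux_swap hxy, ih]

lemma sign_eq_neg_one_pow_invw {n : ℕ} (π : Equiv.Perm (Fin n)) :
    ((Equiv.Perm.sign π : ℤ)) = (-1) ^ invw ⇑π := by
  rw [sign_eq_signAux]
  unfold Equiv.Perm.signAux
  rw [show ((∏ x ∈ Equiv.Perm.finPairsLT n,
    if π x.1 ≤ π x.2 then (-1 : ℤˣ) else 1 : ℤˣ) : ℤ)
    = ∏ x ∈ Equiv.Perm.finPairsLT n, ((if π x.1 ≤ π x.2 then (-1 : ℤˣ) else 1 : ℤˣ) : ℤ) from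
    map_prod (Units.coeHom ℤ) _ _]
  simp only [apply_ite (fun u : ℤˣ => (u : ℤ)), Units.val_neg, Units.val_one]
  rw [Finset.prod_ite, Finset.prod_const, Finset.prod_const, one_pow, mul_one]
  congr 1
  unfold invw
  apply Finset.card_bij (fun (x : Σ _ : Fin n, Fin n) _ => (x.2, x.1))
  · rintro ⟨a, b⟩ hx
    simp only [Finset.mem_filter, Equiv.Perm.mem_finPairsLT] at hx ⊢
    refine ⟨Finset.mem_univ _, hx.1, ?_⟩
    rcases lt_or_eq_of_le hx.2 with h | h
    · exact h
    · exact absurd (π.injective h) (by intro e; exact absurd e (ne_of_gt hx.1))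
  · rintro ⟨a, b⟩ ha ⟨c, d⟩ hc h
    simp only [Prod.mk.injEq] at h
    cases h.1; cases h.2; rfl
  · rintro ⟨a, b⟩ hb
    simp only [Finset.mem_filter, Finset.mem_univ, true_and] at hb
    exact ⟨⟨b, a⟩, by simp [Equiv.Perm.mem_finPairsLT, hb.1, le_of_lt hb.2], rfl⟩


lemma invw_eq_sum {n : ℕ} {α : Type*} [LinearOrder α] (f : Fin n → α) :
    invw f = ∑ i : Fin n, ∑ j : Fin n, if i < j ∧ f j < f i then 1 else 0 := by
  rw [invw, Finset.card_filter]
  exact Fintype.sum_prod_type _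

lemma cnt_eq_sum {n : ℕ} {α : Type*} [LinearOrder α] (a : α) (f : Fin n → α) :
    cnt a f = ∑ j : Fin n, if f j < a then 1 else 0 := by
  rw [cnt, Finset.card_filter]

lemma invw_cons {n : ℕ} {α : Type*} [LinearOrder α] (a : α) (f : Fin n → α) :
    invw (Fin.cons a f) = cnt a f + invw f := by
  simp only [invw_eq_sum, cnt_eq_sum, Fin.sum_univ_succ, Fin.cons_zero, Fin.cons_succ,
    Fin.succ_pos, Fin.succ_lt_succ_iff, Fin.not_lt_zero, false_and, if_false, true_and,
    lt_self_iff_false, and_false, zero_add]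

lemma cnt_cons {n : ℕ} {α : Type*} [LinearOrder α] (a b : α) (f : Fin n → α) :
    cnt a (Fin.cons b f) = (if b < a then 1 else 0) + cnt a f := by
  rw [cnt_eq_sum, cnt_eq_sum, Fin.sum_univ_succ]
  simp

lemma invw_sort {n m : ℕ} (f : Fin n → Fin m) :
    invw ⇑(Tuple.sort f) = invw f := by
  classical
  set σ := Tuple.sort f with hσ
  have hmono : Monotone (f ∘ σ) ∧ ∀ i j, i < j → f (σ i) = f (σ j) → σ i < σ j :=
    (Tuple.eq_sort_iff.mp hσ)
  unfold invw
  apply Finset.card_bij (fun (p : Fin n × Fin n) _ => (σ p.2, σ p.1))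
  · rintro ⟨i, j⟩ hp
    simp only [Finset.mem_filter, Finset.mem_univ, true_and] at hp ⊢
    refine ⟨hp.2, ?_⟩
    rcases lt_or_eq_of_le (hmono.1 (le_of_lt hp.1)) with h | h
    · exact h
    · exact absurd (hmono.2 i j hp.1 h) (not_lt.mpr (le_of_lt hp.2))
  · rintro ⟨i, j⟩ _ ⟨k, l⟩ _ h
    simp only [Prod.mk.injEq, EmbeddingLike.apply_eq_iff_eq] at h
    cases h.1; cases h.2; rfl
  · rintro ⟨a, b⟩ hab
    simp only [Finset.mem_filter, Finset.mem_univ, true_and] at hab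
    refine ⟨(σ.symm b, σ.symm a), ?_, by simp⟩
    simp only [Finset.mem_filter, Finset.mem_univ, true_and, Equiv.apply_symm_apply]
    refine ⟨?_, hab.1⟩
    rcases lt_trichotomy (σ.symm b) (σ.symm a) with h | h | h
    · exact h
    · have : b = a := by
        have := congrArg σ h; simpa using this
      exact absurd this (ne_of_gt hab.1)
    · have := hmono.1 (le_of_lt h)
      simp only [Function.comp_apply, Equiv.apply_symm_apply] at this
      exact absurd this (not_le.mpr hab.2)

lemma sum_cons_fun {n q : ℕ} (F : (Fin (n + 1) → Fin q) → ℤ) :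
    ∑ f : Fin (n + 1) → Fin q, F f = ∑ a : Fin q, ∑ g : Fin n → Fin q, F (Fin.cons a g) := by
  have h2 := Fintype.sum_equiv (Fin.consEquiv fun _ => Fin q)
    (fun p => F (Fin.cons p.1 p.2)) F (fun p => rfl)
  rw [← h2, Fintype.sum_prod_type]

lemma pair_sum {q : ℕ} (G : Fin q → ℤ) (hG : ∀ x, G x = 1 ∨ G x = -1) :
    ∑ a : Fin q, ∑ b : Fin q, (if b < a then (-1 : ℤ) else 1) * G a * G b = q := by
  have h3 : ∀ a b : Fin q,
      (if b < a then (-1 : ℤ) else 1) * G a * G b + (if a < b then (-1 : ℤ) else 1) * G b * G a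
        = if a = b then 2 else 0 := by
    intro a b
    rcases lt_trichotomy a b with h | h | h
    · simp [h, not_lt.mpr (le_of_lt h), ne_of_lt h]; ring
    · subst h
      simp only [lt_self_iff_false, if_false, if_pos rfl, one_mul]
      rcases hG a with h | h <;> rw [h] <;> norm_num
    · simp [h, not_lt.mpr (le_of_lt h), (ne_of_gt h)]; ring
  have h1 : ∑ a : Fin q, ∑ b : Fin q,
      ((if b < a then (-1 : ℤ) else 1) * G a * G b + (if a < b then (-1 : ℤ) else 1) * G b * G a)
        = 2 * q := by
    rw [Finset.sum_congr rfl fun a _ => Finset.sum_congr rfl fun b _ => h3 a b]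
    simp [Finset.sum_ite_eq]
    ring
  have h2 : ∑ a : Fin q, ∑ b : Fin q,
      ((if b < a then (-1 : ℤ) else 1) * G a * G b + (if a < b then (-1 : ℤ) else 1) * G b * G a)
      = (∑ a : Fin q, ∑ b : Fin q, (if b < a then (-1 : ℤ) else 1) * G a * G b)
        + ∑ a : Fin q, ∑ b : Fin q, (if a < b then (-1 : ℤ) else 1) * G b * G a := by
    simp [Finset.sum_add_distrib]
  have h4 : (∑ a : Fin q, ∑ b : Fin q, (if a < b then (-1 : ℤ) else 1) * G b * G a)
      = ∑ a : Fin q, ∑ b : Fin q, (if b < a then (-1 : ℤ) else 1) * G a * G b :=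
    Finset.sum_comm
  rw [h4] at h2
  linarith

lemma word_sum (n q : ℕ) :
    ∑ f : Fin n → Fin q, (-1 : ℤ) ^ invw f = (q : ℤ) ^ ((n + 1) / 2) := by
  induction n using Nat.strong_induction_on with
  | _ n ih =>
    match n with
    | 0 =>
      have h0 : ∀ f : Fin 0 → Fin q, invw f = 0 := by
        intro f; simp [invw]
      simp [h0]
    | 1 =>
      have h0 : ∀ f : Fin 1 → Fin q, invw f = 0 := by
        intro f
        rw [invw, Finset.card_eq_zero]
        ext p
        simp only [Finset.mem_filter, Finset.mem_univ, true_and, Finset.notMem_empty, iff_false]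
        rintro ⟨h, -⟩
        exact absurd (Subsingleton.elim p.1 p.2) (ne_of_lt h)
      simp [h0]
    | (n + 2) =>
      have key : ∀ f : Fin q, True := fun _ => trivial
      rw [sum_cons_fun]
      have step1 : ∀ a : Fin q,
          (∑ g : Fin (n+1) → Fin q, (-1:ℤ) ^ invw (Fin.cons a g))
          = ∑ b : Fin q, ∑ g : Fin n → Fin q, (-1:ℤ) ^ invw (Fin.cons a (Fin.cons b g)) :=
        fun a => sum_cons_fun (F := fun g => (-1:ℤ) ^ invw (Fin.cons a g))
      rw [Finset.sum_congr rfl fun a _ => step1 a]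
      have expand : ∀ (a b : Fin q) (g : Fin n → Fin q),
          (-1:ℤ) ^ invw (Fin.cons a (Fin.cons b g))
            = ((if b < a then (-1:ℤ) else 1) * ((-1:ℤ) ^ cnt a g) * ((-1:ℤ) ^ cnt b g))
              * (-1:ℤ) ^ invw g := by
        intro a b g
        rw [invw_cons, cnt_cons, invw_cons]
        rw [pow_add, pow_add, pow_add]
        rcases lt_or_ge b a with h | h
        · simp [h]; ring
        · simp [not_lt.mpr h]; ring
      rw [Finset.sum_congr rfl fun a _ => Finset.sum_congr rfl fun b _ =>
        Finset.sum_congr rfl fun g _ => expand a b g]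
      have swapord : ∀ a b : Fin q,
          (∑ g : Fin n → Fin q,
            ((if b < a then (-1:ℤ) else 1) * ((-1:ℤ) ^ cnt a g) * ((-1:ℤ) ^ cnt b g))
              * (-1:ℤ) ^ invw g) = ∑ g : Fin n → Fin q,
            ((if b < a then (-1:ℤ) else 1) * ((-1:ℤ) ^ cnt a g) * ((-1:ℤ) ^ cnt b g))
              * (-1:ℤ) ^ invw g := fun _ _ => rfl
      -- exchange summation order: bring g outside
      rw [show (∑ a : Fin q, ∑ b : Fin q, ∑ g : Fin n → Fin q,
          ((if b < a then (-1:ℤ) else 1) * ((-1:ℤ) ^ cnt a g) * ((-1:ℤ) ^ cnt b g))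
            * (-1:ℤ) ^ invw g)
          = ∑ g : Fin n → Fin q, ∑ a : Fin q, ∑ b : Fin q,
          ((if b < a then (-1:ℤ) else 1) * ((-1:ℤ) ^ cnt a g) * ((-1:ℤ) ^ cnt b g))
            * (-1:ℤ) ^ invw g from by
        rw [Finset.sum_congr rfl fun a (_ : a ∈ Finset.univ) =>
          (Finset.sum_comm (s := (Finset.univ : Finset (Fin q)))
            (t := (Finset.univ : Finset (Fin n → Fin q)))
            (f := fun b g => ((if b < a then (-1:ℤ) else 1) * ((-1:ℤ) ^ cnt a g)
              * ((-1:ℤ) ^ cnt b g)) * (-1:ℤ) ^ invw g))]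
        exact Finset.sum_comm]
      have inner : ∀ g : Fin n → Fin q,
          (∑ a : Fin q, ∑ b : Fin q,
            ((if b < a then (-1:ℤ) else 1) * ((-1:ℤ) ^ cnt a g) * ((-1:ℤ) ^ cnt b g))
              * (-1:ℤ) ^ invw g) = (q : ℤ) * (-1:ℤ) ^ invw g := by
        intro g
        have := pair_sum (fun x => (-1:ℤ) ^ cnt x g) (fun x => by
          rcases Nat.even_or_odd (cnt x g) with h | h
          · left; exact h.neg_one_pow
          · right; exact h.neg_one_pow)
        calc ∑ a : Fin q, ∑ b : Fin q,
              ((if b < a then (-1:ℤ) else 1) * ((-1:ℤ) ^ cnt a g) * ((-1:ℤ) ^ cnt b g))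
                * (-1:ℤ) ^ invw g
            = (∑ a : Fin q, ∑ b : Fin q,
              (if b < a then (-1:ℤ) else 1) * ((-1:ℤ) ^ cnt a g) * ((-1:ℤ) ^ cnt b g))
                * (-1:ℤ) ^ invw g := by
              rw [Finset.sum_mul]
              exact Finset.sum_congr rfl fun a _ => by rw [Finset.sum_mul]
          _ = (q : ℤ) * (-1:ℤ) ^ invw g := by rw [this]
      rw [Finset.sum_congr rfl fun g _ => inner g, ← Finset.mul_sum]
      rw [ih n (by omega)]
      rw [show (n + 2 + 1) / 2 = (n + 1) / 2 + 1 from by omega]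
      ring


lemma des_le {n : ℕ} (π : Equiv.Perm (Fin n)) (hn : 0 < n) : des π + 1 ≤ n := by
  have h : (Finset.univ.filter fun i : Fin n =>
      (i : ℕ) + 1 < n ∧ π ⟨((i : ℕ) + 1) % n, Nat.mod_lt _ i.pos⟩ < π i)
      ⊆ Finset.univ.filter fun i : Fin n => (i : ℕ) + 1 < n := by
    intro i hi
    simp only [Finset.mem_filter] at hi ⊢
    exact ⟨hi.1, hi.2.1⟩
  have h2 : (Finset.univ.filter fun i : Fin n => (i : ℕ) + 1 < n).card ≤ n - 1 := by
    have : (Finset.univ.filter fun i : Fin n => (i : ℕ) + 1 < n)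
        ⊆ Finset.univ.erase ⟨n - 1, by omega⟩ := by
      intro i hi
      simp only [Finset.mem_filter] at hi
      refine Finset.mem_erase.mpr ⟨?_, Finset.mem_univ _⟩
      intro e
      have : (i : ℕ) = n - 1 := by rw [e]
      omega
    calc _ ≤ (Finset.univ.erase (⟨n - 1, by omega⟩ : Fin n)).card := Finset.card_le_card this
      _ = n - 1 := by rw [Finset.card_erase_of_mem (Finset.mem_univ _), Finset.card_univ]; simp
  have := Finset.card_le_card h
  unfold des
  omega

lemma card_strictMono (n M : ℕ) :
    ((Finset.univ : Finset (Fin n → Fin M)).filter fun h => StrictMono h).card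
      = M.choose n := by
  classical
  have hM : M.choose n = (Finset.powersetCard n (Finset.univ : Finset (Fin M))).card := by
    rw [Finset.card_powersetCard, Finset.card_univ, Fintype.card_fin]
  rw [hM]
  apply Finset.card_bij (fun h _ => Finset.univ.image h)
  · intro h hh
    simp only [Finset.mem_filter, Finset.mem_univ, true_and] at hh
    rw [Finset.mem_powersetCard_univ, Finset.card_image_of_injective _ hh.injective,
      Finset.card_univ, Fintype.card_fin]
  · intro h1 hh1 h2 hh2 he
    simp only [Finset.mem_filter, Finset.mem_univ, true_and] at hh1 hh2
    have hc1 : (Finset.univ.image h1).card = n := by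
      rw [Finset.card_image_of_injective _ hh1.injective, Finset.card_univ, Fintype.card_fin]
    have e1 := Finset.orderEmbOfFin_unique hc1 (f := h1)
      (fun x => Finset.mem_image_of_mem _ (Finset.mem_univ x)) hh1
    have e2 := Finset.orderEmbOfFin_unique hc1 (f := h2)
      (fun x => by rw [he]; exact Finset.mem_image_of_mem _ (Finset.mem_univ x)) hh2
    rw [e1, e2]
  · intro s hs
    rw [Finset.mem_powersetCard_univ] at hs
    refine ⟨⇑(s.orderEmbOfFin hs), ?_, ?_⟩
    · simp only [Finset.mem_filter, Finset.mem_univ, true_and]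
      exact (s.orderEmbOfFin hs).strictMono
    · have := Finset.range_orderEmbOfFin s hs
      apply Finset.coe_injective
      rw [Finset.coe_image, Finset.coe_univ, Set.image_univ, this]

lemma partition_sum {n q : ℕ} (w : Equiv.Perm (Fin n) → ℤ) :
    ∑ f : Fin n → Fin (q + 1), w (Tuple.sort f)
      = ∑ π : Equiv.Perm (Fin n),
          w π * (((Finset.univ : Finset (Fin n → Fin (q + 1))).filter
            fun f => Tuple.sort f = π).card : ℤ) := by
  classical
  rw [← Finset.sum_fiberwise Finset.univ (fun f => Tuple.sort f) (fun f => w (Tuple.sort f))]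
  refine Finset.sum_congr rfl fun π _ => ?_
  rw [Finset.sum_congr rfl (fun f hf => ?_), Finset.sum_const, nsmul_eq_mul, mul_comm]
  rw [(Finset.mem_filter.mp hf).2]


namespace FC
variable {N : ℕ}

lemma mk_mod_eq_succ (i : Fin N) :
    (⟨(((i.castSucc : Fin (N+1)) : ℕ) + 1) % (N + 1), Nat.mod_lt _ (i.castSucc).pos⟩ : Fin (N+1))
      = i.succ := by
  apply Fin.ext
  simp [Nat.mod_eq_of_lt (by omega : (i : ℕ) + 1 < N + 1)]

lemma des_eq_card (π : Equiv.Perm (Fin (N+1))) :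
    des π = (Finset.univ.filter fun i : Fin N => π i.succ < π i.castSucc).card := by
  unfold des
  apply Finset.card_bij (fun (i : Fin (N+1)) hi => (⟨(i : ℕ), by
    simp only [Finset.mem_filter] at hi; omega⟩ : Fin N))
  · rintro i hi
    simp only [Finset.mem_filter, Finset.mem_univ, true_and] at hi ⊢
    obtain ⟨h1, h2⟩ := hi
    have e1 : (Fin.castSucc ⟨(i : ℕ), by omega⟩ : Fin (N+1)) = i := by apply Fin.ext; simp
    have e2 : (Fin.succ ⟨(i : ℕ), by omega⟩ : Fin (N+1))
        = ⟨((i : ℕ) + 1) % (N+1), Nat.mod_lt _ i.pos⟩ := by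
      apply Fin.ext; simp [Nat.mod_eq_of_lt h1]
    rw [e1, e2]
    exact h2
  · intro i hi j hj h
    simp only [Fin.mk.injEq] at h
    exact Fin.ext h
  · intro j hj
    simp only [Finset.mem_filter, Finset.mem_univ, true_and] at hj
    refine ⟨j.castSucc, ?_, by apply Fin.ext; simp⟩
    simp only [Finset.mem_filter, Finset.mem_univ, true_and]
    constructor
    · simpa using j.isLt
    · rw [mk_mod_eq_succ]; exact hj

/-- adjacent compatibility condition -/
def Adj (π : Equiv.Perm (Fin (N+1))) {q : ℕ} (g : Fin (N+1) → Fin (q+1)) : Prop :=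
  ∀ i : Fin N, g i.castSucc < g i.succ ∨ (g i.castSucc = g i.succ ∧ π i.castSucc < π i.succ)

instance (π : Equiv.Perm (Fin (N+1))) (q : ℕ) (g : Fin (N+1) → Fin (q+1)) :
    Decidable (Adj π g) := by unfold Adj; infer_instance

lemma mon_iff_adj (π : Equiv.Perm (Fin (N+1))) {q : ℕ} (g : Fin (N+1) → Fin (q+1)) :
    (Monotone g ∧ ∀ i j, i < j → g i = g j → π i < π j) ↔ Adj π g := by
  constructor
  · rintro ⟨hm, ht⟩ i
    rcases lt_or_eq_of_le (hm (le_of_lt i.castSucc_lt_succ)) with h | h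
    · exact Or.inl h
    · exact Or.inr ⟨h, ht _ _ i.castSucc_lt_succ h⟩
  · intro ha
    have hm : Monotone g := by
      rw [Fin.monotone_iff_le_succ]
      intro i
      rcases ha i with h | h
      · exact le_of_lt h
      · exact le_of_eq h.1
    refine ⟨hm, ?_⟩
    have adj_tie : ∀ i j : Fin (N+1), (j : ℕ) = (i : ℕ) + 1 → g i = g j → π i < π j := by
      intro i j hij hg
      have hiN : (i : ℕ) < N := by omega
      have e1 : i = (⟨(i : ℕ), hiN⟩ : Fin N).castSucc := by apply Fin.ext; simp
      have e2 : j = (⟨(i : ℕ), hiN⟩ : Fin N).succ := by apply Fin.ext; simp; omega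
      rw [e1, e2]
      rcases ha ⟨(i : ℕ), hiN⟩ with h | h
      · rw [← e1, ← e2] at h; rw [hg] at h; exact absurd h (lt_irrefl _)
      · exact h.2
    have aux : ∀ k : ℕ, ∀ i j : Fin (N+1), (j : ℕ) = (i : ℕ) + k + 1 → g i = g j → π i < π j := by
      intro k
      induction k with
      | zero => exact adj_tie
      | succ k ihk =>
        intro i j hij hg
        have hmid : (i : ℕ) + k + 1 < N + 1 := by omega
        set mid : Fin (N+1) := ⟨(i : ℕ) + k + 1, hmid⟩ with hmid_def
        have h1 : g i ≤ g mid := hm (by rw [Fin.le_def]; simp [hmid_def]; omega)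
        have h2 : g mid ≤ g j := hm (by rw [Fin.le_def]; simp [hmid_def]; omega)
        have e1 : g i = g mid := le_antisymm h1 (hg ▸ h2)
        have e2 : g mid = g j := le_antisymm h2 (hg ▸ h1)
        exact lt_trans (ihk i mid (by simp [hmid_def]) e1)
          (adj_tie mid j (by simp [hmid_def]; omega) e2)
    intro i j hij hg
    have : (j : ℕ) = (i : ℕ) + ((j : ℕ) - (i : ℕ) - 1) + 1 := by
      rw [Fin.lt_def] at hij; omega
    exact aux _ i j this hg

end FC

namespace FC2
open FC
variable {N : ℕ}

/-- number of ascent slots strictly below `i` -/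
def asc {N : ℕ} (π : Equiv.Perm (Fin (N+1))) (i : Fin (N+1)) : ℕ :=
  ((Finset.univ.filter fun k : Fin N => ¬ π k.succ < π k.castSucc).filter
    fun k : Fin N => (k : ℕ) < (i : ℕ)).card

def dsc {N : ℕ} (π : Equiv.Perm (Fin (N+1))) (i : Fin (N+1)) : ℕ :=
  ((Finset.univ.filter fun k : Fin N => π k.succ < π k.castSucc).filter
    fun k : Fin N => (k : ℕ) < (i : ℕ)).card

variable (π : Equiv.Perm (Fin (N+1)))

lemma card_asc_total : (Finset.univ.filter fun k : Fin N => ¬ π k.succ < π k.castSucc).card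
    = N - des π := by
  have h := Finset.card_filter_add_card_filter_not
    (s := (Finset.univ : Finset (Fin N))) (p := fun k : Fin N => π k.succ < π k.castSucc)
  rw [Finset.card_univ, Fintype.card_fin] at h
  rw [← des_eq_card] at h
  omega

lemma des_le' : des π ≤ N := by
  rw [des_eq_card]
  calc _ ≤ (Finset.univ : Finset (Fin N)).card := Finset.card_le_card (Finset.filter_subset _ _)
    _ = N := by rw [Finset.card_univ, Fintype.card_fin]

lemma asc_le (i : Fin (N+1)) : asc π i ≤ N - des π := by
  rw [← card_asc_total π]
  exact Finset.card_le_card (Finset.filter_subset _ _)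

lemma asc_add_dsc (i : Fin (N+1)) : asc π i + dsc π i = (i : ℕ) := by
  unfold asc dsc
  rw [Finset.filter_filter, Finset.filter_filter]
  have h1 : (Finset.univ.filter fun k : Fin N => ¬ π k.succ < π k.castSucc ∧ (k : ℕ) < (i : ℕ))
      = (Finset.univ.filter fun k : Fin N => (k : ℕ) < (i : ℕ)).filter
          fun k => ¬ π k.succ < π k.castSucc := by
    rw [Finset.filter_filter]
    exact Finset.filter_congr fun k _ => by tauto
  have h2 : (Finset.univ.filter fun k : Fin N => (π k.succ < π k.castSucc) ∧ (k : ℕ) < (i : ℕ))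
      = (Finset.univ.filter fun k : Fin N => (k : ℕ) < (i : ℕ)).filter
          fun k : Fin N => π k.succ < π k.castSucc := by
    rw [Finset.filter_filter]
    exact Finset.filter_congr fun k _ => by tauto
  rw [h1, h2]
  have h3 := Finset.card_filter_add_card_filter_not
    (s := Finset.univ.filter fun k : Fin N => (k : ℕ) < (i : ℕ))
    (p := fun k : Fin N => π k.succ < π k.castSucc)
  have h4 : (Finset.univ.filter fun k : Fin N => (k : ℕ) < (i : ℕ)).card = (i : ℕ) := by
    have : (Finset.univ.filter fun k : Fin N => (k : ℕ) < (i : ℕ))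
        = (Finset.range (i : ℕ)).attachFin (fun m hm => by
            rw [Finset.mem_range] at hm; omega) := by
      ext k
      simp [Finset.mem_attachFin, Finset.mem_range]
    rw [this, Finset.card_attachFin, Finset.card_range]
  omega

lemma dsc_le (i : Fin (N+1)) : dsc π i ≤ des π := by
  rw [des_eq_card]
  exact Finset.card_le_card (Finset.filter_subset _ _)

lemma asc_succ (i : Fin N) :
    asc π i.succ = asc π i.castSucc + (if π i.succ < π i.castSucc then 0 else 1) := by
  unfold asc
  have h1 : ((Finset.univ.filter fun k : Fin N => ¬ π k.succ < π k.castSucc).filter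
      fun k : Fin N => (k : ℕ) < (i.succ : ℕ))
      = ((Finset.univ.filter fun k : Fin N => ¬ π k.succ < π k.castSucc).filter
          fun k : Fin N => (k : ℕ) < (i.castSucc : ℕ))
        ∪ ((Finset.univ.filter fun k : Fin N => ¬ π k.succ < π k.castSucc).filter
          fun k : Fin N => k = i) := by
    rw [← Finset.filter_or]
    refine Finset.filter_congr fun k _ => ?_
    simp only [Fin.val_succ, Fin.coe_castSucc]
    constructor
    · intro h
      rcases Nat.lt_or_ge (k : ℕ) (i : ℕ) with h' | h'
      · exact Or.inl h'
      · exact Or.inr (Fin.ext (by omega))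
    · rintro (h | h)
      · omega
      · rw [h]; omega
  rw [h1, Finset.card_union_of_disjoint, Finset.filter_eq']
  · split
    · rename_i hmem
      simp only [Finset.mem_filter, Finset.mem_univ, true_and] at hmem
      rw [if_neg hmem]
      simp
    · rename_i hmem
      simp only [Finset.mem_filter, Finset.mem_univ, true_and, not_not] at hmem
      rw [if_pos hmem]
      simp
  · rw [Finset.disjoint_filter]
    intro k _ hk he
    rw [he] at hk
    simp at hk

lemma sm_gap {m M : ℕ} {h : Fin m → Fin M} (hh : StrictMono h) (k : ℕ) :
    ∀ i j : Fin m, (j : ℕ) = (i : ℕ) + k → (h i : ℕ) + k ≤ (h j : ℕ) := by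
  induction k with
  | zero => intro i j hij; have : i = j := Fin.ext (by omega); rw [this]; omega
  | succ k ihk =>
    intro i j hij
    have hm : (i : ℕ) + k < m := by have := j.isLt; omega
    have h1 := ihk i ⟨(i : ℕ) + k, hm⟩ (by simp)
    have h2 : h ⟨(i : ℕ) + k, hm⟩ < h j := hh (by rw [Fin.lt_def]; simp; omega)
    rw [Fin.lt_def] at h2
    omega

variable (q : ℕ)

lemma bij_card :
    ((Finset.univ : Finset (Fin (N+1) → Fin (q+1))).filter fun g => Adj π g).card
      = ((Finset.univ : Finset (Fin (N+1) → Fin (q + 1 + (N - des π)))).filter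
          fun h => StrictMono h).card := by
  refine Finset.card_bij' (i := fun g hg => fun i => (⟨(g i : ℕ) + asc π i, by
      have h1 := (g i).isLt
      have h2 := asc_le π i
      omega⟩ : Fin (q + 1 + (N - des π))))
    (j := fun h hh => fun i => (⟨(h i : ℕ) - asc π i, by
      simp only [Finset.mem_filter, Finset.mem_univ, true_and] at hh
      have h1 := sm_gap hh (N - (i : ℕ)) i ⟨N, by omega⟩ (by simp; omega)
      have h2 := (h (⟨N, by omega⟩ : Fin (N+1))).isLt
      have h3 := asc_add_dsc π i
      have h4 := dsc_le π i
      have h5 := des_le' π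
      have h6 := i.isLt
      omega⟩ : Fin (q+1))) ?hi ?hj ?li ?ri
  case hi => -- membership: strict mono
    intro g hg
    simp only [Finset.mem_filter, Finset.mem_univ, true_and] at hg ⊢
    rw [Fin.strictMono_iff_lt_succ]
    intro i
    rw [Fin.lt_def]
    simp only
    have ha := asc_succ π i
    rcases hg i with h | h
    · rw [Fin.lt_def] at h
      by_cases hd : π i.succ < π i.castSucc
      · rw [if_pos hd] at ha; omega
      · rw [if_neg hd] at ha; omega
    · obtain ⟨he, hp⟩ := h
      have hd : ¬ π i.succ < π i.castSucc := asymm hp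
      rw [if_neg hd] at ha
      have : (g i.castSucc : ℕ) = (g i.succ : ℕ) := by rw [he]
      omega
  case hj => -- membership: Adj
    intro h hh
    simp only [Finset.mem_filter, Finset.mem_univ, true_and] at hh ⊢
    intro i
    have hlow : ∀ j : Fin (N+1), (j : ℕ) ≤ (h j : ℕ) := by
      intro j
      have := sm_gap hh (j : ℕ) ⟨0, by omega⟩ j (by simp)
      omega
    have hstep : (h i.castSucc : ℕ) < (h i.succ : ℕ) := by
      have := hh (i.castSucc_lt_succ)
      rwa [Fin.lt_def] at this
    have ha := asc_succ π i
    have hasc_le_self : ∀ j : Fin (N+1), asc π j ≤ (j : ℕ) := by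
      intro j
      have := asc_add_dsc π j
      omega
    by_cases hd : π i.succ < π i.castSucc
    · rw [if_pos hd] at ha
      left
      rw [Fin.lt_def]
      simp only
      have h1 := hasc_le_self i.castSucc
      have h2 := hlow i.castSucc
      omega
    · rw [if_neg hd] at ha
      have h1 := hasc_le_self i.castSucc
      have h2 := hlow i.castSucc
      have hπ : π i.castSucc < π i.succ := by
        rcases lt_or_eq_of_le (not_lt.mp hd) with h' | h'
        · exact h'
        · exact absurd (π.injective h') (ne_of_lt i.castSucc_lt_succ)
      rcases Nat.lt_or_ge ((h i.castSucc : ℕ) - asc π i.castSucc)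
        ((h i.succ : ℕ) - asc π i.succ) with hc | hc
      · left; rw [Fin.lt_def]; simp only; omega
      · right
        refine ⟨Fin.ext ?_, hπ⟩
        simp only
        omega
  case li => -- left inverse
    intro g hg
    funext i
    refine Fin.ext ?_
    show (g i : ℕ) + asc π i - asc π i = (g i : ℕ)
    omega
  case ri => -- right inverse
    intro h hh
    simp only [Finset.mem_filter, Finset.mem_univ, true_and] at hh
    funext i
    refine Fin.ext ?_
    show (h i : ℕ) - asc π i + asc π i = (h i : ℕ)
    have h1 := sm_gap hh (i : ℕ) ⟨0, by omega⟩ i (by simp)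
    have h2 := asc_add_dsc π i
    omega

end FC2


open FC FC2 in
lemma fiber_eq_adj {N : ℕ} (π : Equiv.Perm (Fin (N+1))) (q : ℕ) :
    ((Finset.univ : Finset (Fin (N+1) → Fin (q+1))).filter fun f => Tuple.sort f = π).card
      = ((Finset.univ : Finset (Fin (N+1) → Fin (q+1))).filter fun g => FC.Adj π g).card := by
  refine Finset.card_bij' (i := fun f _ => f ∘ ⇑π) (j := fun g _ => g ∘ ⇑π.symm)
    ?hi ?hj ?li ?ri
  case hi =>
    intro f hf
    simp only [Finset.mem_filter, Finset.mem_univ, true_and] at hf ⊢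
    have h := Tuple.eq_sort_iff.mp hf.symm
    exact (FC.mon_iff_adj π (f ∘ ⇑π)).mp ⟨h.1, h.2⟩
  case hj =>
    intro g hg
    simp only [Finset.mem_filter, Finset.mem_univ, true_and] at hg ⊢
    have h := (FC.mon_iff_adj π g).mpr hg
    refine (Tuple.eq_sort_iff.mpr ?_).symm
    constructor
    · have e : ((g ∘ ⇑π.symm) ∘ ⇑π) = g := by funext i; simp
      rw [e]; exact h.1
    · intro i j hij he
      apply h.2 i j hij
      simpa using he
  case li =>
    intro f _
    funext i; simp
  case ri =>
    intro g _
    funext i; simp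

lemma fiber_card {n : ℕ} (q : ℕ) (π : Equiv.Perm (Fin n)) :
    ((Finset.univ : Finset (Fin n → Fin (q + 1))).filter fun f => Tuple.sort f = π).card
      = (q + n - des π).choose n := by
  match n with
  | 0 =>
    have h0 : des π = 0 := by
      unfold des
      rw [Finset.card_eq_zero, Finset.filter_eq_empty_iff]
      intro i _
      exact absurd i.isLt (by omega)
    rw [h0]
    simp only [Nat.add_zero, Nat.sub_zero, Nat.choose_zero_right]
    have : ∀ f : Fin 0 → Fin (q+1), Tuple.sort f = π := fun f => Subsingleton.elim _ _
    rw [Finset.filter_true_of_mem fun f _ => this f, Finset.card_univ]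
    simp
  | (N + 1) =>
    rw [fiber_eq_adj π q, FC2.bij_card π q, card_strictMono]
    have hd := FC2.des_le' π
    congr 1
    omega

lemma worpitzky (k q : ℕ) :
    ∑ π : Equiv.Perm (Fin k), (((q + k - des π).choose k : ℕ) : ℤ) = ((q : ℤ) + 1) ^ k := by
  have h := partition_sum (n := k) (q := q) (fun _ => (1 : ℤ))
  simp only [one_mul] at h
  have hc : ∑ π : Equiv.Perm (Fin k),
        ((((Finset.univ : Finset (Fin k → Fin (q+1))).filter
          fun f => Tuple.sort f = π).card : ℕ) : ℤ)
      = ∑ π : Equiv.Perm (Fin k), (((q + k - des π).choose k : ℕ) : ℤ) :=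
    Finset.sum_congr rfl fun π _ => by rw [fiber_card q π]
  rw [hc] at h
  rw [← h]
  rw [Finset.sum_const, Finset.card_univ]
  have : Fintype.card (Fin k → Fin (q+1)) = (q+1)^k := by
    rw [Fintype.card_fun, Fintype.card_fin, Fintype.card_fin]
  rw [this]
  push_cast
  ring

lemma signed_worpitzky (n q : ℕ) :
    ∑ π : Equiv.Perm (Fin n), (Equiv.Perm.sign π : ℤ) * ((q + n - des π).choose n : ℤ)
      = ((q : ℤ) + 1) ^ ((n + 1) / 2) := by
  have h := partition_sum (n := n) (q := q) (fun π => (Equiv.Perm.sign π : ℤ))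
  have hc : ∑ π : Equiv.Perm (Fin n), (Equiv.Perm.sign π : ℤ)
        * ((((Finset.univ : Finset (Fin n → Fin (q+1))).filter
          fun f => Tuple.sort f = π).card : ℕ) : ℤ)
      = ∑ π : Equiv.Perm (Fin n), (Equiv.Perm.sign π : ℤ)
        * (((q + n - des π).choose n : ℕ) : ℤ) :=
    Finset.sum_congr rfl fun π _ => by rw [fiber_card q π]
  rw [hc] at h
  rw [← h]
  have e : ∀ f : Fin n → Fin (q+1),
      ((Equiv.Perm.sign (Tuple.sort f) : ℤ)) = (-1 : ℤ) ^ invw f := by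
    intro f
    rw [sign_eq_neg_one_pow_invw, invw_sort]
  rw [Finset.sum_congr rfl fun f _ => e f, word_sum]
  push_cast
  ring

lemma coeff_mul_inv (n : ℕ) (c : Equiv.Perm (Fin n) → ℚ) (q : ℕ) :
    PowerSeries.coeff q
        (((∑ π : Equiv.Perm (Fin n), Polynomial.C (c π) * X ^ des π : ℚ[X]) : PowerSeries ℚ)
          * (PowerSeries.invOneSubPow ℚ (n + 1)).val)
      = ∑ π : Equiv.Perm (Fin n), c π * ((q + n - des π).choose n : ℚ) := by
  have hdes : ∀ π : Equiv.Perm (Fin n), des π ≤ n := by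
    intro π
    unfold des
    calc _ ≤ (Finset.univ : Finset (Fin n)).card := Finset.card_le_card (Finset.filter_subset _ _)
      _ = n := by rw [Finset.card_univ, Fintype.card_fin]
  have hcoe : ((∑ π : Equiv.Perm (Fin n), Polynomial.C (c π) * X ^ des π : ℚ[X]) : PowerSeries ℚ)
      = ∑ π : Equiv.Perm (Fin n),
          (PowerSeries.C (c π)) * (PowerSeries.X : PowerSeries ℚ) ^ des π := by
    rw [← Polynomial.coeToPowerSeries.ringHom_apply, map_sum]
    refine Finset.sum_congr rfl fun π _ => ?_
    rw [map_mul, map_pow, Polynomial.coeToPowerSeries.ringHom_apply,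
      Polynomial.coeToPowerSeries.ringHom_apply, Polynomial.coe_C, Polynomial.coe_X]
  rw [hcoe, Finset.sum_mul, map_sum]
  refine Finset.sum_congr rfl fun π _ => ?_
  rw [PowerSeries.invOneSubPow_val_succ_eq_mk_add_choose]
  rw [mul_assoc, PowerSeries.coeff_C_mul, mul_comm (PowerSeries.X ^ des π : PowerSeries ℚ) _,
    PowerSeries.coeff_mul_X_pow']
  congr 1
  by_cases hq : des π ≤ q
  · rw [if_pos hq, PowerSeries.coeff_mk]
    norm_cast
    congr 1
    omega
  · rw [if_neg hq]
    have h0 : (q + n - des π).choose n = 0 :=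
      Nat.choose_eq_zero_of_lt (by have := hdes π; omega)
    rw [h0]
    simp

lemma main_identity (n : ℕ) (hn : 0 < n) :
    ∑ π : Equiv.Perm (Fin n), ((Equiv.Perm.sign π : ℤ) : ℚ[X]) * X ^ des π
      = (1 - X) ^ (n - (n + 1) / 2) * Eulerian ((n + 1) / 2) := by
  classical
  set k := (n + 1) / 2 with hk
  have hkn : k ≤ n := by omega
  -- rewrite LHS as a C-sum polynomial
  have hL : (∑ π : Equiv.Perm (Fin n), ((Equiv.Perm.sign π : ℤ) : ℚ[X]) * X ^ des π)
      = ∑ π : Equiv.Perm (Fin n),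
          Polynomial.C (((Equiv.Perm.sign π : ℤ) : ℚ)) * X ^ des π := by
    refine Finset.sum_congr rfl fun π _ => ?_
    rw [show (((Equiv.Perm.sign π : ℤ)) : ℚ[X])
        = Polynomial.C (((Equiv.Perm.sign π : ℤ) : ℚ)) from
      (map_intCast (Polynomial.C : ℚ →+* ℚ[X]) _).symm]
  have hE : Eulerian k = ∑ π : Equiv.Perm (Fin k), Polynomial.C ((1 : ℚ)) * X ^ des π := by
    unfold Eulerian
    refine Finset.sum_congr rfl fun π _ => ?_
    rw [Polynomial.C_1, one_mul]
  set PD : ℚ[X] := ∑ π : Equiv.Perm (Fin n),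
    Polynomial.C (((Equiv.Perm.sign π : ℤ) : ℚ)) * X ^ des π with hPD
  have key : ((PD : ℚ[X]) : PowerSeries ℚ) * (PowerSeries.invOneSubPow ℚ (n + 1)).val
      = ((Eulerian k : ℚ[X]) : PowerSeries ℚ)
        * (PowerSeries.invOneSubPow ℚ (k + 1)).val := by
    apply PowerSeries.ext
    intro q
    rw [hPD, hE]
    rw [coeff_mul_inv n (fun π => ((Equiv.Perm.sign π : ℤ) : ℚ)) q,
      coeff_mul_inv k (fun _ => (1 : ℚ)) q]
    have h1 : ∑ π : Equiv.Perm (Fin n),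
        ((Equiv.Perm.sign π : ℤ) : ℚ) * ((q + n - des π).choose n : ℚ)
        = ((q : ℚ) + 1) ^ k := by
      rw [hk]
      exact_mod_cast signed_worpitzky n q
    have h2 : ∑ π : Equiv.Perm (Fin k),
        (1 : ℚ) * ((q + k - des π).choose k : ℚ) = ((q : ℚ) + 1) ^ k := by
      simp only [one_mul]
      exact_mod_cast worpitzky k q
    rw [h1, h2]
  -- unit manipulation
  have hpow : ((1 : PowerSeries ℚ) - PowerSeries.X) ^ (n + 1)
      = ((1 : PowerSeries ℚ) - PowerSeries.X) ^ (n - k)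
        * ((1 : PowerSeries ℚ) - PowerSeries.X) ^ (k + 1) := by
    rw [← pow_add]
    congr 1
    omega
  have hinv1 : (PowerSeries.invOneSubPow ℚ (n + 1)).val
      * ((1 : PowerSeries ℚ) - PowerSeries.X) ^ (n + 1) = 1 := by
    rw [← PowerSeries.invOneSubPow_inv_eq_one_sub_pow]
    exact (PowerSeries.invOneSubPow ℚ (n + 1)).val_inv
  have hinv2 : (PowerSeries.invOneSubPow ℚ (k + 1)).val
      * ((1 : PowerSeries ℚ) - PowerSeries.X) ^ (k + 1) = 1 := by
    rw [← PowerSeries.invOneSubPow_inv_eq_one_sub_pow]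
    exact (PowerSeries.invOneSubPow ℚ (k + 1)).val_inv
  have hps : ((PD : ℚ[X]) : PowerSeries ℚ)
      = ((Eulerian k : ℚ[X]) : PowerSeries ℚ)
        * ((1 : PowerSeries ℚ) - PowerSeries.X) ^ (n - k) := by
    calc ((PD : ℚ[X]) : PowerSeries ℚ)
        = ((PD : ℚ[X]) : PowerSeries ℚ)
          * ((PowerSeries.invOneSubPow ℚ (n + 1)).val
            * ((1 : PowerSeries ℚ) - PowerSeries.X) ^ (n + 1)) := by rw [hinv1, mul_one]
      _ = (((PD : ℚ[X]) : PowerSeries ℚ) * (PowerSeries.invOneSubPow ℚ (n + 1)).val)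
          * ((1 : PowerSeries ℚ) - PowerSeries.X) ^ (n + 1) := by ring
      _ = (((Eulerian k : ℚ[X]) : PowerSeries ℚ)
            * (PowerSeries.invOneSubPow ℚ (k + 1)).val)
          * ((1 : PowerSeries ℚ) - PowerSeries.X) ^ (n + 1) := by rw [key]
      _ = ((Eulerian k : ℚ[X]) : PowerSeries ℚ)
            * ((1 : PowerSeries ℚ) - PowerSeries.X) ^ (n - k)
          * ((PowerSeries.invOneSubPow ℚ (k + 1)).val
            * ((1 : PowerSeries ℚ) - PowerSeries.X) ^ (k + 1)) := by rw [hpow]; ring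
      _ = ((Eulerian k : ℚ[X]) : PowerSeries ℚ)
            * ((1 : PowerSeries ℚ) - PowerSeries.X) ^ (n - k) := by rw [hinv2, mul_one]
  have hone : ((1 - X : ℚ[X]) : PowerSeries ℚ) = (1 : PowerSeries ℚ) - PowerSeries.X := by
    rw [← Polynomial.coeToPowerSeries.ringHom_apply, map_sub, map_one,
      Polynomial.coeToPowerSeries.ringHom_apply, Polynomial.coe_X]
  have hco : ((PD : ℚ[X]) : PowerSeries ℚ)
      = (((1 - X) ^ (n - k) * Eulerian k : ℚ[X]) : PowerSeries ℚ) := by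
    rw [Polynomial.coe_mul, Polynomial.coe_pow, hone, hps]
    ring
  have hgoal : PD = (1 - X) ^ (n - k) * Eulerian k := Polynomial.coe_inj.mp hco
  rw [hL]
  exact hgoal


end SgnDesAux

theorem stmt19 (n : ℕ) (hn : 0 < n) (m : ℕ) :
    (n = 2 * m →
      ∑ π : Equiv.Perm (Fin n), ((Equiv.Perm.sign π : ℤ) : ℚ[X]) * X ^ des π
        = (1 - X) ^ m * Eulerian m) ∧
    (n = 2 * m + 1 →
      ∑ π : Equiv.Perm (Fin n), ((Equiv.Perm.sign π : ℤ) : ℚ[X]) * X ^ des π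
        = (1 - X) ^ m * Eulerian (m + 1)) := by
  constructor
  · rintro rfl
    have h := SgnDesAux.main_identity (2 * m) hn
    rw [show (2 * m + 1) / 2 = m from by omega, show 2 * m - m = m from by omega] at h
    exact h
  · rintro rfl
    have h := SgnDesAux.main_identity (2 * m + 1) hn
    rw [show (2 * m + 1 + 1) / 2 = m + 1 from by omega,
      show 2 * m + 1 - (m + 1) = m from by omega] at h
    exact h
end
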